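/- arXiv:1602.08448 — 8 statements merged into one kernel-verified Lean document; each statement's English description precedes it below -/
import Mathlib

section
/- Let θ̲ < θ̄, k ≥ 2, let θ* ∈ (θ̲, θ̄)ᵏ have a unique largest coordinate at index I* (θ*_{I*} > θ*_j for all j ≠ I*), and fix i ≠ I*. Then for every nonnegative vector ψ ∈ ℝᵏ with ψ₁ + ⋯ + ψₖ = 1, the infimum of D_ψ(θ* ‖ θ) := Σ_{j=1}^{k} ψ_j·d(θ*_j, θ_j) over the set Θ̄_i := { θ ∈ (θ̲, θ̄)ᵏ : θ_i ≥ θ_{I*} } equals the infimum over x ∈ ℝ of ψ_{I*}·d(θ*_{I*}, x) + ψ_i·d(θ*_i, x). -/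
/-- Kullback–Leibler divergence in a one-dimensional exponential family with
log-partition function `A`: `d(θ, x) = (θ - x)·A'(θ) - A(θ) + A(x)`. -/
noncomputable def dKL (A : ℝ → ℝ) (θ x : ℝ) : ℝ := (θ - x) * deriv A θ - A θ + A x

lemma dKL_self (A : ℝ → ℝ) (θ : ℝ) : dKL A θ θ = 0 := by simp [dKL]

lemma dKL_mono_left {A : ℝ → ℝ} (hA : Differentiable ℝ A)
    (hconv : StrictConvexOn ℝ (Set.univ : Set ℝ) A) {x y θ : ℝ}
    (hxy : x ≤ y) (hyθ : y ≤ θ) : dKL A θ y ≤ dKL A θ x := by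
  rcases eq_or_lt_of_le hxy with rfl | hxy'
  · exact le_refl _
  have hc := hconv.convexOn
  have hmono := hc.monotoneOn_deriv (fun z _ => hA z)
  have h1 : slope A x y ≤ deriv A y :=
    hc.slope_le_deriv trivial trivial hxy' (hA y)
  have h2 : deriv A y ≤ deriv A θ := hmono trivial trivial hyθ
  have hslope : (A y - A x) / (y - x) ≤ deriv A θ := by
    rw [slope_def_field] at h1
    calc (A y - A x) / (y - x) ≤ deriv A y := h1
    _ ≤ deriv A θ := h2
  have hpos : 0 < y - x := by linarith
  have : A y - A x ≤ (y - x) * deriv A θ := by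
    rw [div_le_iff₀ hpos] at hslope; linarith
  simp only [dKL]; nlinarith

lemma dKL_mono_right {A : ℝ → ℝ} (hA : Differentiable ℝ A)
    (hconv : StrictConvexOn ℝ (Set.univ : Set ℝ) A) {x y θ : ℝ}
    (hθx : θ ≤ x) (hxy : x ≤ y) : dKL A θ x ≤ dKL A θ y := by
  rcases eq_or_lt_of_le hxy with rfl | hxy'
  · exact le_refl _
  have hc := hconv.convexOn
  have hmono := hc.monotoneOn_deriv (fun z _ => hA z)
  have h1 : deriv A x ≤ slope A x y :=
    hc.deriv_le_slope trivial trivial hxy' (hA x)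
  have h2 : deriv A θ ≤ deriv A x := hmono trivial trivial hθx
  have hslope : deriv A θ ≤ (A y - A x) / (y - x) := by
    rw [slope_def_field] at h1
    calc deriv A θ ≤ deriv A x := h2
    _ ≤ (A y - A x) / (y - x) := h1
  have hpos : 0 < y - x := by linarith
  have : (y - x) * deriv A θ ≤ A y - A x := by
    rw [le_div_iff₀ hpos] at hslope; linarith
  simp only [dKL]; nlinarith

lemma dKL_nonneg {A : ℝ → ℝ} (hA : Differentiable ℝ A)
    (hconv : StrictConvexOn ℝ (Set.univ : Set ℝ) A) (θ x : ℝ) : 0 ≤ dKL A θ x := by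
  rcases le_total x θ with h | h
  · have := dKL_mono_left hA hconv h (le_refl θ)
    rw [dKL_self] at this; linarith
  · have := dKL_mono_right hA hconv (le_refl θ) h
    rw [dKL_self] at this; linarith

/-- For `i ≠ I*`, the infimum of `D_ψ(θ* ‖ θ) = Σ_j ψ_j d(θ*_j, θ_j)` over
`Θ̄_i = {θ ∈ (θ̲, θ̄)ᵏ : θ_i ≥ θ_{I*}}` equals
`inf_{x ∈ ℝ} ψ_{I*} d(θ*_{I*}, x) + ψ_i d(θ*_i, x)`. -/
theorem stmt_1 (A : ℝ → ℝ) (hA : Differentiable ℝ A)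
    (hconv : StrictConvexOn ℝ (Set.univ : Set ℝ) A)
    (lo hi : ℝ) (hlh : lo < hi) (k : ℕ) (hk : 2 ≤ k)
    (θs : Fin k → ℝ) (hθs : ∀ j, θs j ∈ Set.Ioo lo hi)
    (Istar : Fin k) (hIstar : ∀ j, j ≠ Istar → θs j < θs Istar)
    (i : Fin k) (hiI : i ≠ Istar)
    (ψ : Fin k → ℝ) (hψ : ∀ j, 0 ≤ ψ j) (hsum : ∑ j, ψ j = 1) :
    sInf ((fun θ : Fin k → ℝ => ∑ j, ψ j * dKL A (θs j) (θ j)) ''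
        {θ : Fin k → ℝ | (∀ j, θ j ∈ Set.Ioo lo hi) ∧ θ Istar ≤ θ i}) =
      ⨅ x : ℝ, (ψ Istar * dKL A (θs Istar) x + ψ i * dKL A (θs i) x) := by
  set f : ℝ → ℝ := fun x => ψ Istar * dKL A (θs Istar) x + ψ i * dKL A (θs i) x with hf
  have hii : θs i < θs Istar := hIstar i hiI
  have hIlo := (hθs Istar).1
  have hIhi := (hθs Istar).2
  have hilo := (hθs i).1
  have hihi := (hθs i).2
  -- nonnegativity of terms
  have hterm : ∀ (j : Fin k) (x : ℝ), 0 ≤ ψ j * dKL A (θs j) x :=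
    fun j x => mul_nonneg (hψ j) (dKL_nonneg hA hconv _ _)
  have hfnn : ∀ x, 0 ≤ f x := fun x => add_nonneg (hterm _ _) (hterm _ _)
  have hbddf : BddBelow (Set.range f) := ⟨0, by rintro _ ⟨x, rfl⟩; exact hfnn x⟩
  set S := ((fun θ : Fin k → ℝ => ∑ j, ψ j * dKL A (θs j) (θ j)) ''
      {θ : Fin k → ℝ | (∀ j, θ j ∈ Set.Ioo lo hi) ∧ θ Istar ≤ θ i}) with hS
  have hbddS : BddBelow S := by
    refine ⟨0, ?_⟩
    rintro _ ⟨θ, _, rfl⟩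
    exact Finset.sum_nonneg fun j _ => hterm j _
  have hne : S.Nonempty := by
    refine ⟨_, ⟨fun _ => θs i, ⟨fun j => hθs i, le_refl _⟩, rfl⟩⟩
  apply le_antisymm
  · -- sInf S ≤ ⨅ f
    apply le_ciInf
    intro x
    set y := max (θs i) (min x (θs Istar)) with hy
    have hylo : lo < y := lt_max_of_lt_left hilo
    have hyhi : y < hi := max_lt hihi (lt_of_le_of_lt (min_le_right _ _) hIhi)
    -- f y ≤ f x
    have hfy : f y ≤ f x := by
      rcases le_total x (θs i) with hxl | hxl
      · have hyi : y = θs i := by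
          rw [hy, min_eq_left (le_trans hxl hii.le), max_eq_left hxl]
        rw [hyi]
        have h1 : dKL A (θs Istar) (θs i) ≤ dKL A (θs Istar) x :=
          dKL_mono_left hA hconv hxl hii.le
        have h2 : dKL A (θs i) (θs i) ≤ dKL A (θs i) x := by
          rw [dKL_self]; exact dKL_nonneg hA hconv _ _
        simp only [hf]
        exact add_le_add (mul_le_mul_of_nonneg_left h1 (hψ _))
          (mul_le_mul_of_nonneg_left h2 (hψ _))
      · rcases le_total x (θs Istar) with hxr | hxr
        · have hyx : y = x := by rw [hy, min_eq_left hxr, max_eq_right hxl]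
          rw [hyx]
        · have hyI : y = θs Istar := by
            rw [hy, min_eq_right hxr, max_eq_right hii.le]
          rw [hyI]
          have h1 : dKL A (θs Istar) (θs Istar) ≤ dKL A (θs Istar) x := by
            rw [dKL_self]; exact dKL_nonneg hA hconv _ _
          have h2 : dKL A (θs i) (θs Istar) ≤ dKL A (θs i) x :=
            dKL_mono_right hA hconv hii.le hxr
          simp only [hf]
          exact add_le_add (mul_le_mul_of_nonneg_left h1 (hψ _))
            (mul_le_mul_of_nonneg_left h2 (hψ _))
    -- construct the feasible point
    set θ' : Fin k → ℝ := fun j => if j = Istar ∨ j = i then y else θs j with hθ'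
    have hmem : (∀ j, θ' j ∈ Set.Ioo lo hi) ∧ θ' Istar ≤ θ' i := by
      constructor
      · intro j
        by_cases h : j = Istar ∨ j = i
        · simp only [hθ', if_pos h]; exact ⟨hylo, hyhi⟩
        · simp only [hθ', if_neg h]; exact hθs j
      · simp [hθ']
    have hval : ∑ j, ψ j * dKL A (θs j) (θ' j) = f y := by
      have hsub : ({i, Istar} : Finset (Fin k)) ⊆ Finset.univ := Finset.subset_univ _
      rw [← Finset.sum_subset hsub]
      · rw [Finset.sum_pair hiI]
        have hi' : θ' i = y := by simp [hθ']
        have hI' : θ' Istar = y := by simp [hθ']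
        rw [hi', hI', hf]; ring
      · intro j _ hj
        simp only [Finset.mem_insert, Finset.mem_singleton, not_or] at hj
        have : θ' j = θs j := by
          simp only [hθ', if_neg (by tauto : ¬(j = Istar ∨ j = i))]
        rw [this, dKL_self, mul_zero]
    calc sInf S ≤ ∑ j, ψ j * dKL A (θs j) (θ' j) :=
          csInf_le hbddS ⟨θ', hmem, rfl⟩
      _ = f y := hval
      _ ≤ f x := hfy
  · -- ⨅ f ≤ sInf S
    apply le_csInf hne
    rintro b ⟨θ, ⟨hmemθ, hle⟩, rfl⟩
    set a := θ Istar with ha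
    set c := θ i with hc
    set x := max a (min c (θs Istar)) with hx
    have h1 : dKL A (θs Istar) x ≤ dKL A (θs Istar) a := by
      rcases le_total a (θs Istar) with haI | haI
      · have hxle : x ≤ θs Istar := max_le haI (min_le_right _ _)
        have hax : a ≤ x := le_max_left _ _
        exact dKL_mono_left hA hconv hax hxle
      · have hxa : x = a := by
          rw [hx, max_eq_left (le_trans (min_le_right _ _) haI)]
        rw [hxa]
    have h2 : dKL A (θs i) x ≤ dKL A (θs i) c := by
      rcases le_total c (θs Istar) with hcI | hcI
      · have hxc : x = c := by rw [hx, min_eq_left hcI, max_eq_right hle]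
        rw [hxc]
      · have hxI : θs Istar ≤ x := le_max_of_le_right (by rw [min_eq_right hcI])
        have hxc : x ≤ c := max_le hle (min_le_left _ _)
        exact dKL_mono_right hA hconv (le_trans hii.le hxI) hxc
    have hfx : f x ≤ ψ Istar * dKL A (θs Istar) a + ψ i * dKL A (θs i) c := by
      exact add_le_add (mul_le_mul_of_nonneg_left h1 (hψ _))
        (mul_le_mul_of_nonneg_left h2 (hψ _))
    have hpair : ψ Istar * dKL A (θs Istar) a + ψ i * dKL A (θs i) c ≤
        ∑ j, ψ j * dKL A (θs j) (θ j) := by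
      have := Finset.sum_le_sum_of_subset_of_nonneg
        (Finset.subset_univ ({i, Istar} : Finset (Fin k)))
        (fun j _ _ => hterm j (θ j))
      rwa [Finset.sum_pair hiI, ← ha, ← hc, add_comm] at this
    calc (⨅ x, f x) ≤ f x := ciInf_le hbddf x
      _ ≤ _ := le_trans hfx hpair
end

section
/- Fix θ₁, θ₂ ∈ ℝ and β, ψ > 0. There exists a unique x̄ ∈ [min(θ₁, θ₂), max(θ₁, θ₂)] satisfying A'(x̄) = (β·A'(θ₁) + ψ·A'(θ₂)) / (β + ψ); this x̄ is the unique global minimizer over x ∈ ℝ of the function x ↦ β·d(θ₁, x) + ψ·d(θ₂, x), and consequently C(β, ψ) = β·d(θ₁, x̄) + ψ·d(θ₂, x̄). -/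
/-- `C(β, ψ) = inf_{x ∈ ℝ} β·d(θ₁, x) + ψ·d(θ₂, x)`. -/
noncomputable def Cfun (A : ℝ → ℝ) (θ₁ θ₂ β ψ : ℝ) : ℝ :=
  ⨅ x : ℝ, (β * dKL A θ₁ x + ψ * dKL A θ₂ x)

/-- There is a unique `x̄ ∈ [min(θ₁,θ₂), max(θ₁,θ₂)]` with
`A'(x̄) = (β·A'(θ₁) + ψ·A'(θ₂))/(β + ψ)`; it is the unique global minimizer of
`x ↦ β·d(θ₁, x) + ψ·d(θ₂, x)`, and `C(β, ψ) = β·d(θ₁, x̄) + ψ·d(θ₂, x̄)`. -/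
theorem stmt_3 (A : ℝ → ℝ) (hA : Differentiable ℝ A)
    (hconv : StrictConvexOn ℝ (Set.univ : Set ℝ) A)
    (θ₁ θ₂ β ψ : ℝ) (hβ : 0 < β) (hψ : 0 < ψ) :
    ∃ xb : ℝ,
      (xb ∈ Set.Icc (min θ₁ θ₂) (max θ₁ θ₂) ∧
        deriv A xb = (β * deriv A θ₁ + ψ * deriv A θ₂) / (β + ψ)) ∧
      (∀ y ∈ Set.Icc (min θ₁ θ₂) (max θ₁ θ₂),
        deriv A y = (β * deriv A θ₁ + ψ * deriv A θ₂) / (β + ψ) → y = xb) ∧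
      (∀ x : ℝ, x ≠ xb →
        β * dKL A θ₁ xb + ψ * dKL A θ₂ xb < β * dKL A θ₁ x + ψ * dKL A θ₂ x) ∧
      Cfun A θ₁ θ₂ β ψ = β * dKL A θ₁ xb + ψ * dKL A θ₂ xb := by
  have hβψ : (0:ℝ) < β + ψ := by linarith
  set t : ℝ := (β * deriv A θ₁ + ψ * deriv A θ₂) / (β + ψ) with ht
  -- Darboux: the image of Icc under deriv A is convex
  have hIcc : Convex ℝ (Set.Icc (min θ₁ θ₂) (max θ₁ θ₂)) := convex_Icc _ _
  have himg : Convex ℝ (deriv A '' Set.Icc (min θ₁ θ₂) (max θ₁ θ₂)) :=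
    hIcc.image_deriv (fun x _ => hA x)
  have hθ₁ : θ₁ ∈ Set.Icc (min θ₁ θ₂) (max θ₁ θ₂) :=
    ⟨min_le_left _ _, le_max_left _ _⟩
  have hθ₂ : θ₂ ∈ Set.Icc (min θ₁ θ₂) (max θ₁ θ₂) :=
    ⟨min_le_right _ _, le_max_right _ _⟩
  have hmem : t ∈ deriv A '' Set.Icc (min θ₁ θ₂) (max θ₁ θ₂) := by
    have h := himg (Set.mem_image_of_mem _ hθ₁) (Set.mem_image_of_mem _ hθ₂)
      (le_of_lt (div_pos hβ hβψ)) (le_of_lt (div_pos hψ hβψ))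
      (by field_simp)
    have : (β / (β + ψ)) • deriv A θ₁ + (ψ / (β + ψ)) • deriv A θ₂ = t := by
      simp only [smul_eq_mul, ht]
      field_simp
    rwa [this] at h
  obtain ⟨xb, hxbIcc, hxbderiv⟩ := hmem
  -- strict monotonicity of deriv A
  have hmono : StrictMono (deriv A) := by
    have := hconv.strictMonoOn_deriv (fun x _ => hA x)
    intro x y hxy
    exact this (Set.mem_univ x) (Set.mem_univ y) hxy
  have hstrict : ∀ x : ℝ, x ≠ xb →
      β * dKL A θ₁ xb + ψ * dKL A θ₂ xb < β * dKL A θ₁ x + ψ * dKL A θ₂ x := by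
    intro x hx
    -- key: A x - A xb > deriv A xb * (x - xb)
    have key : deriv A xb * (x - xb) < A x - A xb := by
      rcases lt_or_gt_of_ne hx with h | h
      · -- x < xb
        have hs := hconv.slope_lt_deriv (Set.mem_univ x) (Set.mem_univ xb) h (hA xb)
        rw [slope_def_field] at hs
        have hxx : 0 < xb - x := by linarith
        have := (div_lt_iff₀ hxx).mp hs
        nlinarith
      · -- xb < x
        have hs := hconv.deriv_lt_slope (Set.mem_univ xb) (Set.mem_univ x) h (hA xb)
        rw [slope_def_field] at hs
        have hxx : 0 < x - xb := by linarith
        have := (lt_div_iff₀ hxx).mp hs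
        nlinarith
    have ht' : β * deriv A θ₁ + ψ * deriv A θ₂ = (β + ψ) * deriv A xb := by
      rw [hxbderiv, ht]; field_simp
    have expand : β * dKL A θ₁ x + ψ * dKL A θ₂ x - (β * dKL A θ₁ xb + ψ * dKL A θ₂ xb)
        = (β + ψ) * (A x - A xb) - (β * deriv A θ₁ + ψ * deriv A θ₂) * (x - xb) := by
      simp only [dKL]; ring
    have expand2 : β * dKL A θ₁ x + ψ * dKL A θ₂ x - (β * dKL A θ₁ xb + ψ * dKL A θ₂ xb)
        = (β + ψ) * ((A x - A xb) - deriv A xb * (x - xb)) := by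
      rw [expand, ht']; ring
    have hpos := mul_pos hβψ (by linarith : (0:ℝ) < (A x - A xb) - deriv A xb * (x - xb))
    linarith
  have hmin : ∀ x : ℝ, β * dKL A θ₁ xb + ψ * dKL A θ₂ xb ≤ β * dKL A θ₁ x + ψ * dKL A θ₂ x := by
    intro x
    rcases eq_or_ne x xb with rfl | h
    · exact le_refl _
    · exact (hstrict x h).le
  refine ⟨xb, ⟨hxbIcc, hxbderiv⟩, ?_, hstrict, ?_⟩
  · intro y _ hy
    exact hmono.injective (hy.trans hxbderiv.symm)
  · apply le_antisymm
    · refine ciInf_le ⟨β * dKL A θ₁ xb + ψ * dKL A θ₂ xb, ?_⟩ xb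
      rintro v ⟨x, rfl⟩
      exact hmin x
    · exact le_ciInf hmin
end

section
/- Fix θ₁, θ₂ ∈ ℝ with θ₁ ≠ θ₂. Then C is strictly increasing in each argument when the other argument is strictly positive: if β > 0 and 0 ≤ ψ' < ψ'' then C(β, ψ') < C(β, ψ''), and if ψ > 0 and 0 ≤ β' < β'' then C(β', ψ) < C(β'', ψ). -/
/-- Tangent line lemma: a strictly convex differentiable function lies strictly
above its tangent lines. -/
lemma tangent_lt {A : ℝ → ℝ} (hA : Differentiable ℝ A)
    (hconv : StrictConvexOn ℝ (Set.univ : Set ℝ) A) {θ x : ℝ} (h : x ≠ θ) :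
    A θ + (x - θ) * deriv A θ < A x := by
  rcases lt_or_gt_of_ne h with hx | hx
  · have := hconv.slope_lt_deriv (Set.mem_univ x) (Set.mem_univ θ) hx (hA θ)
    rw [slope_def_field, div_lt_iff₀ (by linarith)] at this
    nlinarith
  · have := hconv.deriv_lt_slope (Set.mem_univ θ) (Set.mem_univ x) hx (hA θ)
    rw [slope_def_field, lt_div_iff₀ (by linarith)] at this
    nlinarith

lemma dKL_pos {A : ℝ → ℝ} (hA : Differentiable ℝ A)
    (hconv : StrictConvexOn ℝ (Set.univ : Set ℝ) A) {θ x : ℝ} (h : x ≠ θ) :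
    0 < dKL A θ x := by
  have := tangent_lt hA hconv h
  unfold dKL; nlinarith [this]

lemma deriv_strictMono {A : ℝ → ℝ} (hA : Differentiable ℝ A)
    (hconv : StrictConvexOn ℝ (Set.univ : Set ℝ) A) : StrictMono (deriv A) := by
  have := hconv.strictMonoOn_deriv (fun x _ => hA x)
  intro x y hxy; exact this (Set.mem_univ x) (Set.mem_univ y) hxy

/-- Existence of a global minimizer of `x ↦ β·d(θ₁,x) + ψ·d(θ₂,x)`, characterized
by the first-order condition. -/
lemma exists_min {A : ℝ → ℝ} (hA : Differentiable ℝ A)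
    (hconv : StrictConvexOn ℝ (Set.univ : Set ℝ) A)
    (θ₁ θ₂ β ψ : ℝ) (hβ : 0 ≤ β) (hψ : 0 ≤ ψ) (hpos : 0 < β + ψ) :
    ∃ x₀, (β + ψ) * deriv A x₀ = β * deriv A θ₁ + ψ * deriv A θ₂ ∧
      ∀ x, β * dKL A θ₁ x₀ + ψ * dKL A θ₂ x₀ ≤ β * dKL A θ₁ x + ψ * dKL A θ₂ x := by
  set a := min θ₁ θ₂
  set b := max θ₁ θ₂
  have hab : a ≤ b := min_le_max
  have hmono : StrictMono (deriv A) := deriv_strictMono hA hconv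
  set m := (β * deriv A θ₁ + ψ * deriv A θ₂) / (β + ψ) with hm
  have ha1 : deriv A a ≤ deriv A θ₁ := hmono.monotone (min_le_left _ _)
  have ha2 : deriv A a ≤ deriv A θ₂ := hmono.monotone (min_le_right _ _)
  have hb1 : deriv A θ₁ ≤ deriv A b := hmono.monotone (le_max_left _ _)
  have hb2 : deriv A θ₂ ≤ deriv A b := hmono.monotone (le_max_right _ _)
  have hma : deriv A a ≤ m := by
    rw [hm, le_div_iff₀ hpos]; nlinarith
  have hmb : m ≤ deriv A b := by
    rw [hm, div_le_iff₀ hpos]; nlinarith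
  obtain ⟨x₀, -, hx₀⟩ := exists_hasDerivWithinAt_eq_of_ge_of_le hab
    (fun x _ => (hA x).hasDerivAt.hasDerivWithinAt) hma hmb
  have heq : (β + ψ) * deriv A x₀ = β * deriv A θ₁ + ψ * deriv A θ₂ := by
    rw [hx₀, hm]; field_simp
  refine ⟨x₀, heq, fun x => ?_⟩
  rcases eq_or_ne x x₀ with rfl | hx
  · exact le_refl _
  · have ht := tangent_lt hA hconv hx
    unfold dKL
    have key : 0 < (β + ψ) * (A x - (A x₀ + (x - x₀) * deriv A x₀)) :=
      mul_pos hpos (by linarith)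
    have heq' : (x - x₀) * ((β + ψ) * deriv A x₀)
        = (x - x₀) * (β * deriv A θ₁ + ψ * deriv A θ₂) := by rw [heq]
    nlinarith [key, heq']

/-- If `θ₁ ≠ θ₂`, then `C` is strictly increasing in each argument when the other
argument is strictly positive. -/
theorem stmt_4 (A : ℝ → ℝ) (hA : Differentiable ℝ A)
    (hconv : StrictConvexOn ℝ (Set.univ : Set ℝ) A)
    (θ₁ θ₂ : ℝ) (hne : θ₁ ≠ θ₂) :
    (∀ β ψ' ψ'' : ℝ, 0 < β → 0 ≤ ψ' → ψ' < ψ'' →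
      Cfun A θ₁ θ₂ β ψ' < Cfun A θ₁ θ₂ β ψ'') ∧
    (∀ ψ β' β'' : ℝ, 0 < ψ → 0 ≤ β' → β' < β'' →
      Cfun A θ₁ θ₂ β' ψ < Cfun A θ₁ θ₂ β'' ψ) := by
  have hmono : StrictMono (deriv A) := deriv_strictMono hA hconv
  constructor
  · intro β ψ' ψ'' hβ hψ' h
    obtain ⟨x₀, heq, hmin⟩ := exists_min hA hconv θ₁ θ₂ β ψ'' hβ.le
      (hψ'.trans h.le) (by linarith)
    have hx₀ne : x₀ ≠ θ₂ := by
      rintro rfl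
      have h1 : β * deriv A x₀ = β * deriv A θ₁ := by linarith
      exact hne (hmono.injective (mul_left_cancel₀ hβ.ne' h1)).symm
    have hd2 : 0 < dKL A θ₂ x₀ := dKL_pos hA hconv hx₀ne
    have hbdd' : BddBelow (Set.range fun x => β * dKL A θ₁ x + ψ' * dKL A θ₂ x) := by
      refine ⟨0, ?_⟩; rintro _ ⟨x, rfl⟩
      exact add_nonneg (mul_nonneg hβ.le (dKL_nonneg hA hconv _ _))
        (mul_nonneg hψ' (dKL_nonneg hA hconv _ _))
    have hC2 : Cfun A θ₁ θ₂ β ψ'' = β * dKL A θ₁ x₀ + ψ'' * dKL A θ₂ x₀ := by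
      refine le_antisymm (ciInf_le ⟨0, ?_⟩ x₀) (le_ciInf hmin)
      rintro _ ⟨x, rfl⟩
      exact add_nonneg (mul_nonneg hβ.le (dKL_nonneg hA hconv _ _))
        (mul_nonneg (by linarith) (dKL_nonneg hA hconv _ _))
    have hC1 : Cfun A θ₁ θ₂ β ψ' ≤ β * dKL A θ₁ x₀ + ψ' * dKL A θ₂ x₀ :=
      ciInf_le hbdd' x₀
    have : ψ' * dKL A θ₂ x₀ < ψ'' * dKL A θ₂ x₀ :=
      mul_lt_mul_of_pos_right h hd2
    linarith
  · intro ψ β' β'' hψ hβ' h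
    obtain ⟨x₀, heq, hmin⟩ := exists_min hA hconv θ₁ θ₂ β'' ψ
      (hβ'.trans h.le) hψ.le (by linarith)
    have hx₀ne : x₀ ≠ θ₁ := by
      rintro rfl
      have h1 : ψ * deriv A x₀ = ψ * deriv A θ₂ := by linarith
      exact hne (hmono.injective (mul_left_cancel₀ hψ.ne' h1))
    have hd1 : 0 < dKL A θ₁ x₀ := dKL_pos hA hconv hx₀ne
    have hbdd' : BddBelow (Set.range fun x => β' * dKL A θ₁ x + ψ * dKL A θ₂ x) := by
      refine ⟨0, ?_⟩; rintro _ ⟨x, rfl⟩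
      exact add_nonneg (mul_nonneg hβ' (dKL_nonneg hA hconv _ _))
        (mul_nonneg hψ.le (dKL_nonneg hA hconv _ _))
    have hC2 : Cfun A θ₁ θ₂ β'' ψ = β'' * dKL A θ₁ x₀ + ψ * dKL A θ₂ x₀ := by
      refine le_antisymm (ciInf_le ⟨0, ?_⟩ x₀) (le_ciInf hmin)
      rintro _ ⟨x, rfl⟩
      exact add_nonneg (mul_nonneg (by linarith) (dKL_nonneg hA hconv _ _))
        (mul_nonneg hψ.le (dKL_nonneg hA hconv _ _))
    have hC1 : Cfun A θ₁ θ₂ β' ψ ≤ β' * dKL A θ₁ x₀ + ψ * dKL A θ₂ x₀ :=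
      ciInf_le hbdd' x₀
    have : β' * dKL A θ₁ x₀ < β'' * dKL A θ₁ x₀ :=
      mul_lt_mul_of_pos_right h hd1
    linarith
end

section
/- For all β, β' ∈ (0, 1), Γ*_{β'} ≤ max{ β'/β, (1 - β')/(1 - β) } · Γ*_β. In particular, the supremum of Γ*_{β'} over β' ∈ (0, 1) is at most 2·Γ*_{1/2}. -/
/-- `Γ*_β`: the supremum, over nonnegative vectors `ψ` with `ψ_{I*} = β` and
`Σ ψ_i = 1`, of `min_{i ≠ I*} C_i(β, ψ_i)`. -/
noncomputable def Gamma (A : ℝ → ℝ) (k : ℕ) (θs : Fin k → ℝ) (Istar : Fin k) (β : ℝ) : ℝ :=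
  sSup ((fun ψ : Fin k → ℝ =>
      ⨅ i : {i : Fin k // i ≠ Istar}, Cfun A (θs Istar) (θs i.1) β (ψ i.1)) ''
    {ψ : Fin k → ℝ | (∀ i, 0 ≤ ψ i) ∧ ψ Istar = β ∧ (∑ i, ψ i) = 1})

section helpers

variable {A : ℝ → ℝ} (hA : Differentiable ℝ A)
  (hconv : StrictConvexOn ℝ (Set.univ : Set ℝ) A)

include hA hconv

lemma Cfun_nonneg {θ₁ θ₂ β ψ : ℝ} (hβ : 0 ≤ β) (hψ : 0 ≤ ψ) : 0 ≤ Cfun A θ₁ θ₂ β ψ :=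
  le_ciInf fun x => add_nonneg (mul_nonneg hβ (dKL_nonneg hA hconv θ₁ x))
    (mul_nonneg hψ (dKL_nonneg hA hconv θ₂ x))

lemma Cfun_bdd {θ₁ θ₂ β ψ : ℝ} (hβ : 0 ≤ β) (hψ : 0 ≤ ψ) :
    BddBelow (Set.range fun x => β * dKL A θ₁ x + ψ * dKL A θ₂ x) := by
  refine ⟨0, ?_⟩
  rintro _ ⟨x, rfl⟩
  exact add_nonneg (mul_nonneg hβ (dKL_nonneg hA hconv θ₁ x))
    (mul_nonneg hψ (dKL_nonneg hA hconv θ₂ x))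

lemma Cfun_le {θ₁ θ₂ β ψ : ℝ} (hβ : 0 ≤ β) (hψ : 0 ≤ ψ) :
    Cfun A θ₁ θ₂ β ψ ≤ ψ * dKL A θ₂ θ₁ := by
  have := ciInf_le (Cfun_bdd hA hconv (θ₁:=θ₁) (θ₂:=θ₂) hβ hψ) θ₁
  simp [dKL_self] at this; exact this

/-- Key comparison: if `β' ≤ c·β` and `ψ' ≤ c·ψ` (all nonneg, `c > 0`) then
`C(β',ψ') ≤ c·C(β,ψ)`. -/
lemma Cfun_le_mul {θ₁ θ₂ β ψ β' ψ' c : ℝ} (hc : 0 < c)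
    (hβ' : 0 ≤ β') (hψ' : 0 ≤ ψ') (h1 : β' ≤ c * β) (h2 : ψ' ≤ c * ψ) :
    Cfun A θ₁ θ₂ β' ψ' ≤ c * Cfun A θ₁ θ₂ β ψ := by
  rw [mul_comm, ← div_le_iff₀ hc]
  refine le_ciInf fun x => ?_
  rw [div_le_iff₀ hc, mul_comm]
  calc Cfun A θ₁ θ₂ β' ψ' ≤ β' * dKL A θ₁ x + ψ' * dKL A θ₂ x :=
        ciInf_le (Cfun_bdd hA hconv hβ' hψ') x
    _ ≤ c * (β * dKL A θ₁ x + ψ * dKL A θ₂ x) := by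
        have d1 := dKL_nonneg hA hconv θ₁ x
        have d2 := dKL_nonneg hA hconv θ₂ x
        nlinarith [mul_le_mul_of_nonneg_right h1 d1, mul_le_mul_of_nonneg_right h2 d2]

end helpers

/-- For all `β, β' ∈ (0,1)`, `Γ*_{β'} ≤ max{β'/β, (1-β')/(1-β)}·Γ*_β`; in
particular `sup_{β' ∈ (0,1)} Γ*_{β'} ≤ 2·Γ*_{1/2}`. -/
theorem stmt_7 (A : ℝ → ℝ) (hA : Differentiable ℝ A)
    (hconv : StrictConvexOn ℝ (Set.univ : Set ℝ) A)
    (lo hi : ℝ) (hlh : lo < hi) (k : ℕ) (hk : 2 ≤ k)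
    (θs : Fin k → ℝ) (hθs : ∀ j, θs j ∈ Set.Ioo lo hi)
    (Istar : Fin k) (hIstar : ∀ j, j ≠ Istar → θs j < θs Istar) :
    (∀ β β' : ℝ, β ∈ Set.Ioo (0:ℝ) 1 → β' ∈ Set.Ioo (0:ℝ) 1 →
      Gamma A k θs Istar β' ≤
        max (β' / β) ((1 - β') / (1 - β)) * Gamma A k θs Istar β) ∧
    sSup (Gamma A k θs Istar '' Set.Ioo (0:ℝ) 1) ≤ 2 * Gamma A k θs Istar (1/2) := by
  classical
  have hcard : 1 < Fintype.card (Fin k) := by simp; omega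
  obtain ⟨i₀, hi₀⟩ := Fintype.exists_ne_of_one_lt_card hcard Istar
  haveI hne : Nonempty {i : Fin k // i ≠ Istar} := ⟨⟨i₀, hi₀⟩⟩
  have hk1 : (1:ℝ) ≤ (k:ℝ) - 1 := by
    have : (2:ℝ) ≤ (k:ℝ) := by exact_mod_cast hk
    linarith
  set F := fun (β : ℝ) (ψ : Fin k → ℝ) =>
    ⨅ i : {i : Fin k // i ≠ Istar}, Cfun A (θs Istar) (θs i.1) β (ψ i.1) with hF
  set S := fun (β : ℝ) =>
    {ψ : Fin k → ℝ | (∀ i, 0 ≤ ψ i) ∧ ψ Istar = β ∧ (∑ i, ψ i) = 1} with hS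
  have hGamma : ∀ β, Gamma A k θs Istar β = sSup (F β '' S β) := fun β => rfl
  -- the infimum family is bounded below by 0 for feasible data
  have hFbdd : ∀ (β : ℝ) (ψ : Fin k → ℝ), 0 ≤ β → (∀ i, 0 ≤ ψ i) →
      BddBelow (Set.range fun i : {i : Fin k // i ≠ Istar} =>
        Cfun A (θs Istar) (θs i.1) β (ψ i.1)) := by
    intro β ψ hβ hψ
    exact ⟨0, by rintro _ ⟨i, rfl⟩; exact Cfun_nonneg hA hconv hβ (hψ i.1)⟩
  -- nonnegativity of F
  have hFnonneg : ∀ (β : ℝ) (ψ : Fin k → ℝ), 0 ≤ β → (∀ i, 0 ≤ ψ i) → 0 ≤ F β ψ := by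
    intro β ψ hβ hψ
    exact le_ciInf fun i => Cfun_nonneg hA hconv hβ (hψ i.1)
  -- bounded above
  have hbdd : ∀ β : ℝ, 0 ≤ β → BddAbove (F β '' S β) := by
    intro β hβ
    refine ⟨dKL A (θs i₀) (θs Istar), ?_⟩
    rintro _ ⟨ψ, ⟨hψ0, hψI, hψs⟩, rfl⟩
    have h1 : F β ψ ≤ Cfun A (θs Istar) (θs i₀) β (ψ i₀) :=
      ciInf_le (hFbdd β ψ hβ hψ0) ⟨i₀, hi₀⟩
    have h2 : Cfun A (θs Istar) (θs i₀) β (ψ i₀) ≤ ψ i₀ * dKL A (θs i₀) (θs Istar) :=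
      Cfun_le hA hconv hβ (hψ0 i₀)
    have hψle : ψ i₀ ≤ 1 := by
      rw [← hψs]
      exact Finset.single_le_sum (fun i _ => hψ0 i) (Finset.mem_univ i₀)
    have hd := dKL_nonneg hA hconv (θs i₀) (θs Istar)
    nlinarith
  -- nonempty feasible set
  have hSne : ∀ β : ℝ, β ∈ Set.Ioo (0:ℝ) 1 → (S β).Nonempty := by
    intro β hβ
    refine ⟨fun i => if i = Istar then β else (1 - β) / ((k:ℝ) - 1), fun i => ?_, by simp, ?_⟩
    · by_cases h : i = Istar
      · simp [h, hβ.1.le]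
      · simp only [h, if_false]
        exact div_nonneg (by linarith [hβ.2]) (by linarith)
    · rw [← Finset.add_sum_erase _ _ (Finset.mem_univ Istar)]
      simp only [if_pos rfl, ↓reduceIte]
      rw [Finset.sum_congr rfl (fun i hi => if_neg (Finset.mem_erase.mp hi).1),
        Finset.sum_const, Finset.card_erase_of_mem (Finset.mem_univ Istar),
        Finset.card_univ, Fintype.card_fin]
      rw [nsmul_eq_mul, Nat.cast_sub (by omega)]
      have hk0 : (k:ℝ) - 1 ≠ 0 := by linarith
      push_cast
      field_simp
      ring
  -- nonnegativity of Gamma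
  have hGnonneg : ∀ β : ℝ, β ∈ Set.Ioo (0:ℝ) 1 → 0 ≤ Gamma A k θs Istar β := by
    intro β hβ
    obtain ⟨ψ, hψ⟩ := hSne β hβ
    calc (0:ℝ) ≤ F β ψ := hFnonneg β ψ hβ.1.le hψ.1
      _ ≤ Gamma A k θs Istar β := le_csSup (hbdd β hβ.1.le) ⟨ψ, hψ, rfl⟩
  -- main inequality
  have key : ∀ β β' : ℝ, β ∈ Set.Ioo (0:ℝ) 1 → β' ∈ Set.Ioo (0:ℝ) 1 →
      Gamma A k θs Istar β' ≤
        max (β' / β) ((1 - β') / (1 - β)) * Gamma A k θs Istar β := by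
    intro β β' hβ hβ'
    obtain ⟨hβ0, hβ1⟩ := hβ
    obtain ⟨hβ'0, hβ'1⟩ := hβ'
    set c := max (β' / β) ((1 - β') / (1 - β)) with hcdef
    have hc : 0 < c := lt_of_lt_of_le (div_pos hβ'0 hβ0) (le_max_left _ _)
    rw [hGamma β']
    refine csSup_le ((hSne β' ⟨hβ'0, hβ'1⟩).image _) ?_
    rintro _ ⟨ψ', ⟨hψ'0, hψ'I, hψ's⟩, rfl⟩
    set r := (1 - β) / (1 - β') with hrdef
    have hr : 0 ≤ r := div_nonneg (by linarith) (by linarith)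
    set ψ := fun i => if i = Istar then β else ψ' i * r with hψdef
    have hψS : ψ ∈ S β := by
      refine ⟨fun i => ?_, by simp [hψdef], ?_⟩
      · by_cases h : i = Istar
        · simp [hψdef, h, hβ0.le]
        · simp only [hψdef, h, if_false]
          exact mul_nonneg (hψ'0 i) hr
      · rw [hψdef, ← Finset.add_sum_erase _ _ (Finset.mem_univ Istar)]
        simp only [if_pos rfl, ↓reduceIte]
        rw [Finset.sum_congr rfl (fun i hi => if_neg (Finset.mem_erase.mp hi).1),
          ← Finset.sum_mul, Finset.sum_erase_eq_sub (Finset.mem_univ Istar), hψ's, hψ'I,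
          hrdef]
        have h1β' : (1:ℝ) - β' ≠ 0 := by linarith
        field_simp
        ring
    -- F β' ψ' ≤ c * F β ψ
    have hstep : F β' ψ' ≤ c * F β ψ := by
      rw [mul_comm, ← div_le_iff₀ hc]
      refine le_ciInf fun i => ?_
      rw [div_le_iff₀ hc, mul_comm]
      have hβle : β' ≤ c * β := by
        have : β' / β ≤ c := le_max_left _ _
        calc β' = (β' / β) * β := by field_simp
          _ ≤ c * β := mul_le_mul_of_nonneg_right this hβ0.le
      have hψle : ψ' i.1 ≤ c * ψ i.1 := by
        have hii : ψ i.1 = ψ' i.1 * r := by simp [hψdef, i.2]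
        have h1 : (1 - β') / (1 - β) ≤ c := le_max_right _ _
        have heq : ((1 - β') / (1 - β)) * (ψ' i.1 * r) = ψ' i.1 := by
          have h1β : (1:ℝ) - β ≠ 0 := by linarith
          have h1β' : (1:ℝ) - β' ≠ 0 := by linarith
          rw [hrdef]; field_simp
        calc ψ' i.1 = ((1 - β') / (1 - β)) * (ψ' i.1 * r) := heq.symm
          _ ≤ c * (ψ' i.1 * r) :=
              mul_le_mul_of_nonneg_right h1 (mul_nonneg (hψ'0 i.1) hr)
          _ = c * ψ i.1 := by rw [hii]
      calc F β' ψ' ≤ Cfun A (θs Istar) (θs i.1) β' (ψ' i.1) :=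
            ciInf_le (hFbdd β' ψ' hβ'0.le hψ'0) i
        _ ≤ c * Cfun A (θs Istar) (θs i.1) β (ψ i.1) :=
            Cfun_le_mul hA hconv hc hβ'0.le (hψ'0 i.1) hβle hψle
    calc F β' ψ' ≤ c * F β ψ := hstep
      _ ≤ c * Gamma A k θs Istar β :=
          mul_le_mul_of_nonneg_left (le_csSup (hbdd β hβ0.le) ⟨ψ, hψS, rfl⟩) hc.le
  refine ⟨key, ?_⟩
  have h12 : (1/2 : ℝ) ∈ Set.Ioo (0:ℝ) 1 := by norm_num
  refine csSup_le ⟨Gamma A k θs Istar (1/2), ⟨1/2, h12, rfl⟩⟩ ?_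
  rintro _ ⟨β', hβ', rfl⟩
  calc Gamma A k θs Istar β'
      ≤ max (β' / (1/2)) ((1 - β') / (1 - 1/2)) * Gamma A k θs Istar (1/2) :=
        key (1/2) β' h12 hβ'
    _ ≤ 2 * Gamma A k θs Istar (1/2) := by
        refine mul_le_mul_of_nonneg_right ?_ (hGnonneg (1/2) h12)
        apply max_le
        · rw [div_le_iff₀ (by norm_num : (0:ℝ) < 1/2)]; linarith [hβ'.2]
        · rw [div_le_iff₀ (by norm_num : (0:ℝ) < 1 - 1/2)]; linarith [hβ'.1]
end

section
/- Suppose additionally that σ > 0 and that d(θ, x) ≥ (A'(θ) - A'(x))²/(2σ²) for all θ, x ∈ [θ̲, θ̄] (this holds whenever each observation distribution in the exponential family with parameter in [θ̲, θ̄] is σ-sub-Gaussian). Define the gaps Δ_i := A'(θ*_{I*}) - A'(θ*_i) for i ≠ I*, which are strictly positive. Then Γ*_{1/2} ≥ 1 / (16·σ²·Σ_{i ≠ I*} Δ_i^{-2}). -/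
/-- Sub-Gaussian lower bound on the optimal exponent:
if `d(θ, x) ≥ (A'(θ) - A'(x))²/(2σ²)` on `[θ̲, θ̄]`, then the gaps
`Δ_i = A'(θ*_{I*}) - A'(θ*_i)` are positive and
`Γ*_{1/2} ≥ 1/(16σ² Σ_{i ≠ I*} Δ_i⁻²)`. -/
theorem stmt_8 (A : ℝ → ℝ) (hA : Differentiable ℝ A)
    (hconv : StrictConvexOn ℝ (Set.univ : Set ℝ) A)
    (lo hi : ℝ) (hlh : lo < hi) (k : ℕ) (hk : 2 ≤ k)
    (θs : Fin k → ℝ) (hθs : ∀ j, θs j ∈ Set.Ioo lo hi)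
    (Istar : Fin k) (hIstar : ∀ j, j ≠ Istar → θs j < θs Istar)
    (σ : ℝ) (hσ : 0 < σ)
    (hsub : ∀ θ ∈ Set.Icc lo hi, ∀ x ∈ Set.Icc lo hi,
      (deriv A θ - deriv A x) ^ 2 / (2 * σ ^ 2) ≤ dKL A θ x) :
    (∀ i, i ≠ Istar → 0 < deriv A (θs Istar) - deriv A (θs i)) ∧
    1 / (16 * σ ^ 2 * ∑ i ∈ Finset.univ.filter (· ≠ Istar),
        ((deriv A (θs Istar) - deriv A (θs i)) ^ 2)⁻¹) ≤
      Gamma A k θs Istar (1/2) := by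
  have hAdiff : ∀ x : ℝ, DifferentiableAt ℝ A x := fun x => hA x
  have hconv' : ConvexOn ℝ Set.univ A := hconv.convexOn
  have hmono : StrictMono (deriv A) := fun x y hxy =>
    hconv.strictMonoOn_deriv (fun z _ => hAdiff z) (Set.mem_univ x) (Set.mem_univ y) hxy
  -- tangent line below the graph
  have tangent : ∀ y x : ℝ, A y + deriv A y * (x - y) ≤ A x := by
    intro y x
    rcases lt_trichotomy y x with h | h | h
    · have h1 := hconv'.deriv_le_slope (Set.mem_univ y) (Set.mem_univ x) h (hAdiff y)
      rw [slope_def_field] at h1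
      have hx : 0 < x - y := by linarith
      rw [le_div_iff₀ hx] at h1
      linarith
    · subst h; simp
    · have h1 := hconv'.slope_le_deriv (Set.mem_univ x) (Set.mem_univ y) h (hAdiff y)
      rw [slope_def_field] at h1
      have hx : 0 < y - x := by linarith
      rw [div_le_iff₀ hx] at h1
      nlinarith
  have dKL_nonneg : ∀ θ x : ℝ, 0 ≤ dKL A θ x := by
    intro θ x
    have h := tangent θ x
    simp only [dKL]; nlinarith
  have dKL_self : ∀ θ : ℝ, dKL A θ θ = 0 := by intro θ; simp [dKL]
  have tail_hi : ∀ θ : ℝ, θ ≤ hi → ∀ x : ℝ, hi ≤ x → dKL A θ hi ≤ dKL A θ x := by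
    intro θ hθ x hx
    have ht := tangent hi x
    have hm : deriv A θ ≤ deriv A hi := hmono.monotone hθ
    have h2 : deriv A θ * (x - hi) ≤ deriv A hi * (x - hi) :=
      mul_le_mul_of_nonneg_right hm (by linarith)
    simp only [dKL]; nlinarith
  have tail_lo : ∀ θ : ℝ, lo ≤ θ → ∀ x : ℝ, x ≤ lo → dKL A θ lo ≤ dKL A θ x := by
    intro θ hθ x hx
    have ht := tangent lo x
    have hm : deriv A lo ≤ deriv A θ := hmono.monotone hθ
    have h2 : deriv A θ * (x - lo) ≤ deriv A lo * (x - lo) :=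
      mul_le_mul_of_nonpos_right hm (by linarith)
    simp only [dKL]; nlinarith
  have hσ2 : (0:ℝ) < σ ^ 2 := by positivity
  -- first conjunct
  have hgap : ∀ i, i ≠ Istar → 0 < deriv A (θs Istar) - deriv A (θs i) := by
    intro i hi
    have := hmono (hIstar i hi)
    linarith
  refine ⟨hgap, ?_⟩
  -- per-pair lower bound
  have claim : ∀ i : Fin k, i ≠ Istar → ∀ ψ : ℝ, 0 ≤ ψ → ψ ≤ 1/2 → ∀ x : ℝ,
      ψ * (deriv A (θs Istar) - deriv A (θs i)) ^ 2 / (4 * σ ^ 2) ≤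
        1/2 * dKL A (θs Istar) x + ψ * dKL A (θs i) x := by
    intro i hine ψ hψ0 hψ2
    have hIcc : ∀ x ∈ Set.Icc lo hi,
        ψ * (deriv A (θs Istar) - deriv A (θs i)) ^ 2 / (4 * σ ^ 2) ≤
          1/2 * dKL A (θs Istar) x + ψ * dKL A (θs i) x := by
      intro x hx
      have hI : θs Istar ∈ Set.Icc lo hi := Set.Ioo_subset_Icc_self (hθs Istar)
      have hi2 : θs i ∈ Set.Icc lo hi := Set.Ioo_subset_Icc_self (hθs i)
      have h1 := hsub (θs Istar) hI x hx
      have h2 := hsub (θs i) hi2 x hx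
      set a := deriv A (θs Istar) - deriv A x with ha
      set b := deriv A (θs i) - deriv A x with hb
      have h1' : a ^ 2 ≤ dKL A (θs Istar) x * (2 * σ ^ 2) :=
        (div_le_iff₀ (by positivity)).mp h1
      have h2' : b ^ 2 ≤ dKL A (θs i) x * (2 * σ ^ 2) :=
        (div_le_iff₀ (by positivity)).mp h2
      have hΔ : deriv A (θs Istar) - deriv A (θs i) = a - b := by rw [ha, hb]; ring
      have key : ψ * (a - b) ^ 2 ≤ a ^ 2 + 2 * (ψ * b ^ 2) := by
        nlinarith [mul_nonneg hψ0 (sq_nonneg (a + b)),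
          mul_nonneg (by linarith : (0:ℝ) ≤ 1 - 2 * ψ) (sq_nonneg a)]
      rw [hΔ]
      have m1 := mul_le_mul_of_nonneg_left h1 (by norm_num : (0:ℝ) ≤ 1/2)
      have m2 := mul_le_mul_of_nonneg_left h2 hψ0
      calc ψ * (a - b) ^ 2 / (4 * σ ^ 2) ≤ (a ^ 2 + 2 * (ψ * b ^ 2)) / (4 * σ ^ 2) := by
            gcongr
        _ = 1/2 * (a ^ 2 / (2 * σ ^ 2)) + ψ * (b ^ 2 / (2 * σ ^ 2)) := by
            field_simp; ring
        _ ≤ 1/2 * dKL A (θs Istar) x + ψ * dKL A (θs i) x := by linarith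
    intro x
    rcases le_or_gt x lo with hxlo | hxlo
    · have h0 := hIcc lo ⟨le_refl lo, hlh.le⟩
      have t1 := tail_lo (θs Istar) (hθs Istar).1.le x hxlo
      have t2 := tail_lo (θs i) (hθs i).1.le x hxlo
      have m2 := mul_le_mul_of_nonneg_left t2 hψ0
      linarith
    rcases le_or_gt hi x with hxhi | hxhi
    · have h0 := hIcc hi ⟨hlh.le, le_refl hi⟩
      have t1 := tail_hi (θs Istar) (hθs Istar).2.le x hxhi
      have t2 := tail_hi (θs i) (hθs i).2.le x hxhi
      have m2 := mul_le_mul_of_nonneg_left t2 hψ0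
      linarith
    · exact hIcc x ⟨hxlo.le, hxhi.le⟩
  -- the weight vector
  obtain ⟨j0, hj0⟩ := Fintype.exists_ne_of_one_lt_card (by simpa using lt_of_lt_of_le one_lt_two hk) Istar
  have hne : Nonempty {i : Fin k // i ≠ Istar} := ⟨⟨j0, hj0⟩⟩
  set S : ℝ := ∑ i ∈ Finset.univ.filter (· ≠ Istar),
      ((deriv A (θs Istar) - deriv A (θs i)) ^ 2)⁻¹ with hSdef
  have hS : 0 < S := by
    rw [hSdef]
    apply Finset.sum_pos
    · intro i hi
      have := hgap i (by simpa using hi)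
      positivity
    · exact ⟨j0, by simpa using hj0⟩
  set ψ : Fin k → ℝ := fun i =>
    if i = Istar then (1/2 : ℝ)
    else ((deriv A (θs Istar) - deriv A (θs i)) ^ 2)⁻¹ / (2 * S) with hψdef
  have hψnn : ∀ i, 0 ≤ ψ i := by
    intro i
    rw [hψdef]
    by_cases h : i = Istar
    · simp [h]
    · simp only [h, if_false]
      positivity
  have hψI : ψ Istar = 1/2 := by simp [hψdef]
  have hψsum : ∑ i, ψ i = 1 := by
    rw [← Finset.sum_filter_add_sum_filter_not Finset.univ (· = Istar)]
    have e1 : Finset.univ.filter (· = Istar) = {Istar} := by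
      ext j; simp
    have e2 : ∑ i ∈ Finset.univ.filter (fun j => ¬ j = Istar), ψ i
        = (∑ i ∈ Finset.univ.filter (fun j => ¬ j = Istar),
            ((deriv A (θs Istar) - deriv A (θs i)) ^ 2)⁻¹) / (2 * S) := by
      rw [Finset.sum_div]
      apply Finset.sum_congr rfl
      intro i hi
      rw [hψdef]
      simp only [Finset.mem_filter] at hi
      simp [hi.2]
    have e3 : (Finset.univ.filter (fun j => ¬ j = Istar))
        = Finset.univ.filter (· ≠ Istar) := rfl
    rw [e1, e2, e3, ← hSdef, Finset.sum_singleton, hψI]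
    field_simp
    ring
  have hψle : ∀ i, i ≠ Istar → ψ i ≤ 1/2 := by
    intro i hi
    have hsingle : ((deriv A (θs Istar) - deriv A (θs i)) ^ 2)⁻¹ ≤ S := by
      rw [hSdef]
      apply Finset.single_le_sum (f := fun j => ((deriv A (θs Istar) - deriv A (θs j)) ^ 2)⁻¹)
      · intro j hj
        have := hgap j (by simpa using hj)
        positivity
      · simpa using hi
    rw [hψdef]
    simp only [hi, if_false]
    rw [div_le_iff₀ (by positivity)]
    linarith
  -- bound each Cfun from below
  have hCfun_lb : ∀ i : {i : Fin k // i ≠ Istar},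
      1 / (16 * σ ^ 2 * S) ≤ Cfun A (θs Istar) (θs i.1) (1/2) (ψ i.1) := by
    intro i
    apply le_ciInf
    intro x
    have step := claim i.1 i.2 (ψ i.1) (hψnn i.1) (hψle i.1 i.2) x
    have hg := hgap i.1 i.2
    have hval : ψ i.1 * (deriv A (θs Istar) - deriv A (θs i.1)) ^ 2 / (4 * σ ^ 2)
        = 1 / (8 * σ ^ 2 * S) := by
      rw [hψdef]
      simp only [i.2, if_false]
      rw [div_mul_eq_mul_div, div_div]
      rw [inv_mul_cancel₀ (by positivity)]
      ring_nf
    have hle : 1 / (16 * σ ^ 2 * S) ≤ 1 / (8 * σ ^ 2 * S) := by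
      apply one_div_le_one_div_of_le
      · positivity
      · nlinarith
    calc 1 / (16 * σ ^ 2 * S) ≤ 1 / (8 * σ ^ 2 * S) := hle
      _ = ψ i.1 * (deriv A (θs Istar) - deriv A (θs i.1)) ^ 2 / (4 * σ ^ 2) := hval.symm
      _ ≤ _ := step
  -- nonnegativity of Cfun pieces for BddBelow facts
  have hrange_bdd : ∀ (θ₁ θ₂ β ψ' : ℝ), 0 ≤ β → 0 ≤ ψ' →
      BddBelow (Set.range fun x => β * dKL A θ₁ x + ψ' * dKL A θ₂ x) := by
    intro θ₁ θ₂ β ψ' hβ hψ'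
    refine ⟨0, ?_⟩
    rintro _ ⟨x, rfl⟩
    exact add_nonneg (mul_nonneg hβ (dKL_nonneg _ _)) (mul_nonneg hψ' (dKL_nonneg _ _))
  -- BddAbove of the image set
  have hbdd : BddAbove ((fun ψ : Fin k → ℝ =>
      ⨅ i : {i : Fin k // i ≠ Istar}, Cfun A (θs Istar) (θs i.1) (1/2) (ψ i.1)) ''
    {ψ : Fin k → ℝ | (∀ i, 0 ≤ ψ i) ∧ ψ Istar = 1/2 ∧ (∑ i, ψ i) = 1}) := by
    refine ⟨dKL A (θs j0) (θs Istar), ?_⟩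
    rintro _ ⟨ψ', ⟨hnn', hI', hsum'⟩, rfl⟩
    have hCnn : ∀ i : {i : Fin k // i ≠ Istar},
        BddBelow (Set.range fun x => 1/2 * dKL A (θs Istar) x + ψ' i.1 * dKL A (θs i.1) x) :=
      fun i => hrange_bdd _ _ _ _ (by norm_num) (hnn' i.1)
    have hbb : BddBelow (Set.range fun i : {i : Fin k // i ≠ Istar} =>
        Cfun A (θs Istar) (θs i.1) (1/2) (ψ' i.1)) := by
      refine ⟨0, ?_⟩
      rintro _ ⟨i, rfl⟩
      apply le_ciInf
      intro x
      exact add_nonneg (mul_nonneg (by norm_num) (dKL_nonneg _ _))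
        (mul_nonneg (hnn' i.1) (dKL_nonneg _ _))
    have step1 := ciInf_le hbb (⟨j0, hj0⟩ : {i : Fin k // i ≠ Istar})
    have step2 : Cfun A (θs Istar) (θs j0) (1/2) (ψ' j0) ≤
        1/2 * dKL A (θs Istar) (θs Istar) + ψ' j0 * dKL A (θs j0) (θs Istar) :=
      ciInf_le (hrange_bdd _ _ _ _ (by norm_num) (hnn' j0)) (θs Istar)
    have hψ'le : ψ' j0 ≤ 1 := by
      rw [← hsum']
      exact Finset.single_le_sum (fun i _ => hnn' i) (Finset.mem_univ j0)
    have step3 : ψ' j0 * dKL A (θs j0) (θs Istar) ≤ dKL A (θs j0) (θs Istar) := by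
      nlinarith [dKL_nonneg (θs j0) (θs Istar), hnn' j0]
    rw [dKL_self] at step2
    simp only at step1 step2
    linarith
  -- membership
  have hmem : (⨅ i : {i : Fin k // i ≠ Istar}, Cfun A (θs Istar) (θs i.1) (1/2) (ψ i.1)) ∈
      ((fun ψ : Fin k → ℝ =>
      ⨅ i : {i : Fin k // i ≠ Istar}, Cfun A (θs Istar) (θs i.1) (1/2) (ψ i.1)) ''
    {ψ : Fin k → ℝ | (∀ i, 0 ≤ ψ i) ∧ ψ Istar = 1/2 ∧ (∑ i, ψ i) = 1}) :=
    ⟨ψ, ⟨hψnn, hψI, hψsum⟩, rfl⟩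
  have hfinal : 1 / (16 * σ ^ 2 * S) ≤
      ⨅ i : {i : Fin k // i ≠ Istar}, Cfun A (θs Istar) (θs i.1) (1/2) (ψ i.1) :=
    le_ciInf hCfun_lb
  exact hfinal.trans (le_csSup hbdd hmem)
end

section
/- Let (Ω, ℱ, 𝐏) be a probability space with a filtration (ℋ_n)_{n ≥ 1}. Let (Y_n)_{n ≥ 1} be identically distributed, square-integrable real random variables adapted to (ℋ_n), and let (X_n)_{n ≥ 1} be {0,1}-valued random variables adapted to (ℋ_n). Suppose that for each n, Y_n is independent of the σ-algebra generated by ℋ_{n-1} together with X_n. Define Z_n := 𝐏(X_n = 1 | ℋ_{n-1}). Then with probability 1: (i) on the event that Σ_{ℓ=1}^{∞} Z_ℓ = ∞, the ratio (Σ_{ℓ=1}^{n} X_ℓ·Y_ℓ) / (Σ_{ℓ=1}^{n} Z_ℓ) converges to 𝐄[Y₁] as n → ∞; and (ii) on the event that Σ_{ℓ=1}^{∞} Z_ℓ < ∞, sup over n of |Σ_{ℓ=1}^{n} X_ℓ·Y_ℓ| is finite. -/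
open MeasureTheory ProbabilityTheory Filter Topology

lemma abel_identity (b c : ℕ → ℝ) (n : ℕ) :
    ∑ ℓ ∈ Finset.range n, b (ℓ + 1) * c ℓ
      = b n * (∑ ℓ ∈ Finset.range n, c ℓ)
        - ∑ ℓ ∈ Finset.range n, (b (ℓ + 1) - b ℓ) * (∑ j ∈ Finset.range ℓ, c j) := by
  induction n with
  | zero => simp
  | succ n ih =>
      rw [Finset.sum_range_succ, Finset.sum_range_succ (f := fun ℓ =>
        (b (ℓ + 1) - b ℓ) * (∑ j ∈ Finset.range ℓ, c j)), ih,
        Finset.sum_range_succ (f := c)]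
      ring

lemma toeplitz_aux {b : ℕ → ℝ} (hb : Monotone b) (hb1 : ∀ n, 1 ≤ b n)
    (hbtop : Tendsto b atTop atTop) {N : ℕ → ℝ} (hN : Tendsto N atTop (𝓝 0)) :
    Tendsto (fun n => (∑ ℓ ∈ Finset.range n, (b (ℓ + 1) - b ℓ) * N ℓ) / b n)
      atTop (𝓝 0) := by
  have hbpos : ∀ n, (0:ℝ) < b n := fun n => lt_of_lt_of_le zero_lt_one (hb1 n)
  rw [Metric.tendsto_atTop]
  intro ε hε
  obtain ⟨k, hk⟩ := (Metric.tendsto_atTop.1 hN) (ε / 4) (by positivity)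
  set A : ℝ := ∑ ℓ ∈ Finset.range k, (b (ℓ + 1) - b ℓ) * |N ℓ| with hA
  have hA0 : 0 ≤ A := Finset.sum_nonneg fun ℓ _ =>
    mul_nonneg (sub_nonneg.2 (hb (Nat.le_succ ℓ))) (abs_nonneg _)
  obtain ⟨n₀, hn₀⟩ := eventually_atTop.1 (tendsto_atTop.1 hbtop (4 * A / ε + 1))
  refine ⟨max k n₀, fun n hn => ?_⟩
  have hkn : k ≤ n := le_trans (le_max_left _ _) hn
  have hbn : 4 * A / ε + 1 ≤ b n := hn₀ n (le_trans (le_max_right _ _) hn)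
  rw [Real.dist_eq, sub_zero, abs_div, abs_of_pos (hbpos n)]
  have h1 : |∑ ℓ ∈ Finset.range n, (b (ℓ + 1) - b ℓ) * N ℓ|
      ≤ A + (ε / 4) * b n := by
    calc |∑ ℓ ∈ Finset.range n, (b (ℓ + 1) - b ℓ) * N ℓ|
        ≤ ∑ ℓ ∈ Finset.range n, |(b (ℓ + 1) - b ℓ) * N ℓ| :=
          Finset.abs_sum_le_sum_abs _ _
      _ = ∑ ℓ ∈ Finset.range n, (b (ℓ + 1) - b ℓ) * |N ℓ| := by
          refine Finset.sum_congr rfl fun ℓ _ => ?_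
          rw [abs_mul, abs_of_nonneg (sub_nonneg.2 (hb (Nat.le_succ ℓ)))]
      _ = A + ∑ ℓ ∈ Finset.Ico k n, (b (ℓ + 1) - b ℓ) * |N ℓ| := by
          rw [hA, ← Finset.sum_range_add_sum_Ico _ hkn]
      _ ≤ A + ∑ ℓ ∈ Finset.Ico k n, (b (ℓ + 1) - b ℓ) * (ε / 4) := by
          gcongr A + ?_
          refine Finset.sum_le_sum fun ℓ hℓ => ?_
          refine mul_le_mul_of_nonneg_left ?_ (sub_nonneg.2 (hb (Nat.le_succ ℓ)))
          have := hk ℓ (Finset.mem_Ico.1 hℓ).1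
          rw [Real.dist_eq, sub_zero] at this
          exact this.le
      _ = A + (ε / 4) * (b n - b k) := by
          rw [← Finset.sum_mul, Finset.sum_Ico_eq_sum_range]
          have : ∑ i ∈ Finset.range (n - k), (b (k + i + 1) - b (k + i))
              = b (k + (n - k)) - b k := by
            induction (n - k) with
            | zero => simp
            | succ m ihm => rw [Finset.sum_range_succ, ihm]; ring_nf
          rw [this, Nat.add_sub_cancel' hkn]; ring
      _ ≤ A + (ε / 4) * b n := by
          have : 0 ≤ b k := (hbpos k).le
          nlinarith [hε]
  calc |∑ ℓ ∈ Finset.range n, (b (ℓ + 1) - b ℓ) * N ℓ| / b n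
      ≤ (A + (ε / 4) * b n) / b n := by
        gcongr
        exact (hbpos n).le
    _ = A / b n + ε / 4 := by rw [add_div, mul_div_assoc, div_self (hbpos n).ne', mul_one]
    _ < ε := by
        have hbn' : 4 * A / ε < b n := by linarith
        have : A / b n < ε / 2 := by
          rw [div_lt_iff₀ (hbpos n)]
          rw [div_lt_iff₀ hε] at hbn'
          nlinarith [hbpos n]
        linarith

lemma kronecker {b c : ℕ → ℝ} (hb : Monotone b) (hb1 : ∀ n, 1 ≤ b n)
    (hbtop : Tendsto b atTop atTop) {L : ℝ}
    (hc : Tendsto (fun n => ∑ ℓ ∈ Finset.range n, c ℓ) atTop (𝓝 L)) :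
    Tendsto (fun n => (∑ ℓ ∈ Finset.range n, b (ℓ + 1) * c ℓ) / b n) atTop (𝓝 0) := by
  have hbpos : ∀ n, (0:ℝ) < b n := fun n => lt_of_lt_of_le zero_lt_one (hb1 n)
  set N : ℕ → ℝ := fun n => ∑ ℓ ∈ Finset.range n, c ℓ with hNdef
  have hN0 : Tendsto (fun n => N n - L) atTop (𝓝 0) := by
    simpa using hc.sub (tendsto_const_nhds (x := L))
  -- split the Toeplitz sum
  have hT : Tendsto (fun n =>
      (∑ ℓ ∈ Finset.range n, (b (ℓ + 1) - b ℓ) * N ℓ) / b n) atTop (𝓝 L) := by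
    have h2 : Tendsto (fun n =>
        (∑ ℓ ∈ Finset.range n, (b (ℓ + 1) - b ℓ) * (N ℓ - L)) / b n) atTop (𝓝 0) :=
      toeplitz_aux hb hb1 hbtop hN0
    have h3 : Tendsto (fun n => L * ((b n - b 0) / b n)) atTop (𝓝 L) := by
      have hinv : Tendsto (fun n => (b n)⁻¹) atTop (𝓝 0) := hbtop.inv_tendsto_atTop
      have : Tendsto (fun n => (b n - b 0) / b n) atTop (𝓝 1) := by
        have := (tendsto_const_nhds (x := (1:ℝ))).sub (hinv.const_mul (b 0))
        rw [mul_zero, sub_zero] at this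
        refine this.congr fun n => ?_
        rw [sub_div, div_self (hbpos n).ne', div_eq_mul_inv, mul_comm]
      have := this.const_mul L
      rwa [mul_one] at this
    have key := h2.add h3
    rw [zero_add] at key
    refine key.congr fun n => ?_
    have : ∑ ℓ ∈ Finset.range n, (b (ℓ + 1) - b ℓ) * N ℓ
        = (∑ ℓ ∈ Finset.range n, (b (ℓ + 1) - b ℓ) * (N ℓ - L))
          + L * (b n - b 0) := by
      have htel : ∑ ℓ ∈ Finset.range n, (b (ℓ + 1) - b ℓ) = b n - b 0 := by
        induction n with
        | zero => simp
        | succ m ihm => rw [Finset.sum_range_succ, ihm]; ring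
      rw [← htel, Finset.mul_sum, ← Finset.sum_add_distrib]
      refine Finset.sum_congr rfl fun ℓ _ => by ring
    rw [this, add_div, mul_div_assoc]
  have final := hc.sub hT
  rw [sub_self] at final
  refine final.congr fun n => ?_
  rw [abel_identity b c n, sub_div, mul_comm, mul_div_assoc,
    div_self (hbpos n).ne', mul_one]

lemma aux_martconv {Ω : Type*} [m0 : MeasurableSpace Ω] (μ : Measure Ω)
    [IsProbabilityMeasure μ] (ℱ : Filtration ℕ m0) (d v g : ℕ → Ω → ℝ) (C B : ℝ)
    (hC : 0 ≤ C)
    (hd2 : ∀ n, MemLp (d n) 2 μ)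
    (hdmeas : ∀ n, StronglyMeasurable[ℱ (n + 1)] (d n))
    (hdcond : ∀ n, μ[d n | ℱ n] =ᵐ[μ] 0)
    (hvint : ∀ n, Integrable (v n) μ)
    (hd2cond : ∀ n, ∀ᵐ ω ∂μ, (μ[fun ω' => d n ω' ^ 2 | ℱ n]) ω ≤ C * v n ω)
    (hgmeas : ∀ n, StronglyMeasurable[ℱ n] (g n))
    (hgbdd : ∀ n ω, |g n ω| ≤ 1)
    (hsum : ∀ n ω, ∑ ℓ ∈ Finset.range n, g ℓ ω ^ 2 * v ℓ ω ≤ B) :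
    ∀ᵐ ω ∂μ, ∃ c, Tendsto (fun n => ∑ ℓ ∈ Finset.range n, g ℓ ω * d ℓ ω)
      atTop (𝓝 c) := by
  set u : ℕ → Ω → ℝ := fun n ω => g n ω * d n ω with hu_def
  set f : ℕ → Ω → ℝ := fun n ω => ∑ ℓ ∈ Finset.range n, u ℓ ω with hf_def
  have hgm0 : ∀ n, AEStronglyMeasurable (g n) μ :=
    fun n => ((hgmeas n).mono (ℱ.le n)).aestronglyMeasurable
  have hdm0 : ∀ n, AEStronglyMeasurable (d n) μ :=
    fun n => ((hdmeas n).mono (ℱ.le (n + 1))).aestronglyMeasurable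
  have hum0 : ∀ n, AEStronglyMeasurable (u n) μ := fun n => (hgm0 n).mul (hdm0 n)
  have hu2 : ∀ n, MemLp (u n) 2 μ := by
    intro n
    refine ((hd2 n).norm).mono' (hum0 n) ?_
    filter_upwards with ω
    rw [Real.norm_eq_abs, Real.norm_eq_abs, abs_mul]
    exact mul_le_of_le_one_left (abs_nonneg _) (hgbdd n ω)
  have huint : ∀ n, Integrable (u n) μ := fun n =>
    memLp_one_iff_integrable.1 ((hu2 n).mono_exponent (by norm_num))
  have hdint : ∀ n, Integrable (d n) μ := fun n =>
    memLp_one_iff_integrable.1 ((hd2 n).mono_exponent (by norm_num))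
  have hf2 : ∀ n, MemLp (f n) 2 μ := by
    intro n
    have heq : f n = ∑ i ∈ Finset.range n, u i := by
      funext ω; simp [hf_def]
    rw [heq]
    exact memLp_finsetSum' _ (fun i _ => hu2 i)
  have hfint : ∀ n, Integrable (f n) μ := fun n =>
    memLp_one_iff_integrable.1 ((hf2 n).mono_exponent (by norm_num))
  have hfmeas : ∀ n, StronglyMeasurable[ℱ n] (f n) := by
    intro n
    refine Finset.stronglyMeasurable_fun_sum _ fun ℓ hℓ => ?_
    have hℓn : ℓ + 1 ≤ n := Finset.mem_range.1 hℓ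
    exact ((hgmeas ℓ).mono (ℱ.mono (Nat.le_of_succ_le hℓn))).mul
      ((hdmeas ℓ).mono (ℱ.mono hℓn))
  have hucond : ∀ n, μ[u n | ℱ n] =ᵐ[μ] 0 := by
    intro n
    have h1 : μ[g n * d n | ℱ n] =ᵐ[μ] g n * μ[d n | ℱ n] :=
      condExp_stronglyMeasurable_mul_of_bound (ℱ.le n) (hgmeas n) (hdint n) 1
        (Eventually.of_forall fun ω => by
          rw [Real.norm_eq_abs]; exact hgbdd n ω)
    refine h1.trans ?_
    filter_upwards [hdcond n] with ω hω
    simp [Pi.mul_apply, hω]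
  have hmart : Martingale f ℱ μ := by
    refine martingale_nat (fun n => hfmeas n) hfint fun n => ?_
    have hstep : f (n + 1) = f n + u n := by
      funext ω; simp [hf_def, Finset.sum_range_succ]
    rw [hstep]
    have h1 : μ[f n + u n | ℱ n] =ᵐ[μ] μ[f n | ℱ n] + μ[u n | ℱ n] :=
      condExp_add (hfint n) (huint n) (ℱ n)
    have h2 : μ[f n | ℱ n] = f n :=
      condExp_of_stronglyMeasurable (ℱ.le n) (hfmeas n) (hfint n)
    refine EventuallyEq.symm (h1.trans ?_)
    filter_upwards [hucond n] with ω hω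
    simp [h2, hω]
  -- cross terms vanish
  have hcross : ∀ n, ∫ ω, f n ω * u n ω ∂μ = 0 := by
    intro n
    have hmul_int : Integrable (fun ω => f n ω * u n ω) μ := by
      refine Integrable.mono' (((hf2 n).integrable_sq.add (hu2 n).integrable_sq).div_const 2)
        ((hf2 n).aestronglyMeasurable.mul (hu2 n).aestronglyMeasurable) ?_
      filter_upwards with ω
      rw [Real.norm_eq_abs, abs_mul]
      simp only [Pi.add_apply]
      nlinarith [sq_nonneg (|f n ω| - |u n ω|), sq_abs (f n ω), sq_abs (u n ω),
        abs_nonneg (f n ω), abs_nonneg (u n ω)]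
    have h1 : μ[(fun ω => f n ω * u n ω) | ℱ n] =ᵐ[μ] f n * μ[u n | ℱ n] :=
      condExp_mul_of_stronglyMeasurable_left (hfmeas n) hmul_int (huint n)
    have h2 : μ[(fun ω => f n ω * u n ω) | ℱ n] =ᵐ[μ] 0 := by
      refine h1.trans ?_
      filter_upwards [hucond n] with ω hω
      simp [Pi.mul_apply, hω]
    calc ∫ ω, f n ω * u n ω ∂μ
        = ∫ ω, (μ[(fun ω' => f n ω' * u n ω') | ℱ n]) ω ∂μ :=
          (integral_condExp (ℱ.le n)).symm
      _ = ∫ ω, (0 : Ω → ℝ) ω ∂μ := integral_congr_ae h2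
      _ = 0 := by simp
  -- second moment of increments
  have hvar : ∀ n, ∫ ω, u n ω ^ 2 ∂μ ≤ ∫ ω, C * (g n ω ^ 2 * v n ω) ∂μ := by
    intro n
    have hg2meas : StronglyMeasurable[ℱ n] (fun ω => g n ω ^ 2) := (hgmeas n).pow 2
    have hg2bdd : ∀ᵐ ω ∂μ, ‖g n ω ^ 2‖ ≤ 1 := by
      filter_upwards with ω
      rw [Real.norm_eq_abs, abs_pow, sq_abs, ← sq_abs]
      nlinarith [hgbdd n ω, abs_nonneg (g n ω)]
    have hd2int : Integrable (fun ω => d n ω ^ 2) μ := (hd2 n).integrable_sq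
    have h1 : μ[(fun ω => g n ω ^ 2) * (fun ω => d n ω ^ 2) | ℱ n]
        =ᵐ[μ] (fun ω => g n ω ^ 2) * μ[(fun ω => d n ω ^ 2) | ℱ n] :=
      condExp_stronglyMeasurable_mul_of_bound (ℱ.le n) hg2meas hd2int 1 hg2bdd
    have hLHSint : Integrable (fun ω => g n ω ^ 2 * (μ[fun ω' => d n ω' ^ 2 | ℱ n]) ω) μ := by
      refine Integrable.congr (integrable_condExp (m := ℱ n)
        (f := (fun ω => g n ω ^ 2) * (fun ω => d n ω ^ 2))) ?_
      exact h1
    have hRHSint : Integrable (fun ω => C * (g n ω ^ 2 * v n ω)) μ := by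
      refine Integrable.mono' ((hvint n).abs.const_mul C)
        ((((hgm0 n).pow 2).mul (hvint n).aestronglyMeasurable).const_mul C) ?_
      filter_upwards with ω
      rw [Real.norm_eq_abs, abs_mul, abs_mul, abs_pow, sq_abs, abs_of_nonneg hC]
      have hle : g n ω ^ 2 ≤ 1 := by
        rw [← sq_abs]; nlinarith [hgbdd n ω, abs_nonneg (g n ω)]
      have h3 : g n ω ^ 2 * |v n ω| ≤ |v n ω| := by
        nlinarith [abs_nonneg (v n ω), sq_nonneg (g n ω)]
      exact mul_le_mul_of_nonneg_left h3 hC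
    calc ∫ ω, u n ω ^ 2 ∂μ
        = ∫ ω, ((fun ω' => g n ω' ^ 2) * fun ω' => d n ω' ^ 2) ω ∂μ := by
          refine integral_congr_ae (Eventually.of_forall fun ω => ?_)
          simp [hu_def, Pi.mul_apply]; ring
      _ = ∫ ω, (μ[(fun ω' => g n ω' ^ 2) * (fun ω' => d n ω' ^ 2) | ℱ n]) ω ∂μ :=
          (integral_condExp (ℱ.le n)).symm
      _ = ∫ ω, g n ω ^ 2 * (μ[fun ω' => d n ω' ^ 2 | ℱ n]) ω ∂μ :=
          integral_congr_ae h1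
      _ ≤ ∫ ω, C * (g n ω ^ 2 * v n ω) ∂μ := by
          refine integral_mono_ae hLHSint hRHSint ?_
          filter_upwards [hd2cond n] with ω hω
          have hg2 : (0:ℝ) ≤ g n ω ^ 2 := sq_nonneg _
          calc g n ω ^ 2 * (μ[fun ω' => d n ω' ^ 2 | ℱ n]) ω
              ≤ g n ω ^ 2 * (C * v n ω) := mul_le_mul_of_nonneg_left hω hg2
            _ = C * (g n ω ^ 2 * v n ω) := by ring
  -- L² bound on f n
  have hL2 : ∀ n, ∫ ω, f n ω ^ 2 ∂μ ≤ C * B := by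
    have hstep : ∀ n, ∫ ω, f n ω ^ 2 ∂μ
        ≤ ∑ ℓ ∈ Finset.range n, ∫ ω, C * (g ℓ ω ^ 2 * v ℓ ω) ∂μ := by
      intro n
      induction n with
      | zero => simp [hf_def]
      | succ n ih =>
          have hfu : f (n + 1) = f n + u n := by
            funext ω; simp [hf_def, Finset.sum_range_succ]
          have hmul_int : Integrable (fun ω => f n ω * u n ω) μ := by
            refine Integrable.mono'
              (((hf2 n).integrable_sq.add (hu2 n).integrable_sq).div_const 2)
              ((hf2 n).aestronglyMeasurable.mul (hu2 n).aestronglyMeasurable) ?_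
            filter_upwards with ω
            rw [Real.norm_eq_abs, abs_mul]
            simp only [Pi.add_apply]
            nlinarith [sq_nonneg (|f n ω| - |u n ω|), sq_abs (f n ω), sq_abs (u n ω),
              abs_nonneg (f n ω), abs_nonneg (u n ω)]
          have hexp : ∫ ω, f (n + 1) ω ^ 2 ∂μ
              = ∫ ω, f n ω ^ 2 ∂μ + 2 * ∫ ω, f n ω * u n ω ∂μ + ∫ ω, u n ω ^ 2 ∂μ := by
            rw [hfu]
            have h3 : Integrable (fun ω => 2 * (f n ω * u n ω)) μ := hmul_int.const_mul 2
            calc ∫ ω, (f n + u n) ω ^ 2 ∂μ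
                = ∫ ω, (f n ω ^ 2 + 2 * (f n ω * u n ω) + u n ω ^ 2) ∂μ := by
                  refine integral_congr_ae (Eventually.of_forall fun ω => ?_)
                  simp only [Pi.add_apply]; ring
              _ = ∫ ω, f n ω ^ 2 ∂μ + 2 * ∫ ω, f n ω * u n ω ∂μ + ∫ ω, u n ω ^ 2 ∂μ := by
                  have h4 : Integrable (fun ω => f n ω ^ 2 + 2 * (f n ω * u n ω)) μ :=
                    (hf2 n).integrable_sq.add h3
                  rw [integral_add h4 (hu2 n).integrable_sq,
                    integral_add (hf2 n).integrable_sq h3, integral_const_mul]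
          rw [hexp, hcross n, Finset.sum_range_succ]
          have := hvar n
          linarith [ih]
    intro n
    refine (hstep n).trans ?_
    have hint_each : ∀ ℓ, Integrable (fun ω => C * (g ℓ ω ^ 2 * v ℓ ω)) μ := by
      intro ℓ
      refine Integrable.mono' ((hvint ℓ).abs.const_mul C)
        ((((hgm0 ℓ).pow 2).mul (hvint ℓ).aestronglyMeasurable).const_mul C) ?_
      filter_upwards with ω
      rw [Real.norm_eq_abs, abs_mul, abs_mul, abs_pow, sq_abs, abs_of_nonneg hC]
      have hle : g ℓ ω ^ 2 ≤ 1 := by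
        rw [← sq_abs]; nlinarith [hgbdd ℓ ω, abs_nonneg (g ℓ ω)]
      have h3 : g ℓ ω ^ 2 * |v ℓ ω| ≤ |v ℓ ω| := by
        nlinarith [abs_nonneg (v ℓ ω), sq_nonneg (g ℓ ω)]
      exact mul_le_mul_of_nonneg_left h3 hC
    calc ∑ ℓ ∈ Finset.range n, ∫ ω, C * (g ℓ ω ^ 2 * v ℓ ω) ∂μ
        = ∫ ω, ∑ ℓ ∈ Finset.range n, C * (g ℓ ω ^ 2 * v ℓ ω) ∂μ :=
          (integral_finset_sum _ fun ℓ _ => hint_each ℓ).symm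
      _ ≤ ∫ ω, (C * B : ℝ) ∂μ := by
          refine integral_mono (integrable_finset_sum _ fun ℓ _ => hint_each ℓ)
            (integrable_const _) fun ω => ?_
          rw [← Finset.mul_sum]
          exact mul_le_mul_of_nonneg_left (hsum n ω) hC
      _ = C * B := by simp
  -- L¹ bound
  have hbdd : ∀ n, eLpNorm (f n) 1 μ ≤ ENNReal.ofReal ((C * B + 1) / 2) := by
    intro n
    rw [eLpNorm_one_eq_lintegral_enorm,
      ← ofReal_integral_norm_eq_lintegral_enorm (hfint n)]
    refine ENNReal.ofReal_le_ofReal ?_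
    have h1 : ∫ ω, ‖f n ω‖ ∂μ ≤ ∫ ω, (f n ω ^ 2 + 1) / 2 ∂μ := by
      refine integral_mono (hfint n).norm
        (((hf2 n).integrable_sq.add (integrable_const 1)).div_const 2) fun ω => ?_
      rw [Real.norm_eq_abs]
      nlinarith [sq_nonneg (|f n ω| - 1), sq_abs (f n ω), abs_nonneg (f n ω)]
    have h2 : ∫ ω, (f n ω ^ 2 + 1) / 2 ∂μ = (∫ ω, f n ω ^ 2 ∂μ + 1) / 2 := by
      rw [integral_div, integral_add (hf2 n).integrable_sq (integrable_const 1)]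
      simp
    refine h1.trans ?_
    rw [h2]
    linarith [hL2 n]
  filter_upwards [hmart.submartingale.exists_ae_tendsto_of_bdd hbdd] with ω hω
  exact hω

/-- Adaptive law of large numbers (Lemma on adaptive sampling).  Sequences are
0-indexed: `Y n`, `X n` play the roles of the paper's `Y_{n+1}`, `X_{n+1}`,
which are adapted to `ℋ_{n+1} = ℱ (n+1)`; `Z n = 𝐏(X_{n+1} = 1 | ℋ_n)`.
With probability 1: on the event `Σ Z_ℓ = ∞`, the ratio
`(Σ_{ℓ≤n} X_ℓ Y_ℓ)/(Σ_{ℓ≤n} Z_ℓ)` converges to `𝐄[Y₁]`; on the event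
`Σ Z_ℓ < ∞`, `sup_n |Σ_{ℓ≤n} X_ℓ Y_ℓ| < ∞`. -/
theorem stmt_10 {Ω : Type*} [m0 : MeasurableSpace Ω] (μ : Measure Ω)
    [IsProbabilityMeasure μ] (ℱ : Filtration ℕ m0) (Y X : ℕ → Ω → ℝ)
    (hYdist : ∀ n, Measure.map (Y n) μ = Measure.map (Y 0) μ)
    (hYL2 : ∀ n, MemLp (Y n) 2 μ)
    (hYadapted : ∀ n, StronglyMeasurable[ℱ (n + 1)] (Y n))
    (hXadapted : ∀ n, StronglyMeasurable[ℱ (n + 1)] (X n))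
    (hX01 : ∀ n ω, X n ω = 0 ∨ X n ω = 1)
    (hindep : ∀ n, Indep (MeasurableSpace.comap (Y n) Real.measurableSpace)
      (ℱ n ⊔ MeasurableSpace.comap (X n) Real.measurableSpace) μ)
    (Z : ℕ → Ω → ℝ)
    (hZ : ∀ n, Z n = μ[Set.indicator {ω | X n ω = 1} (fun _ => (1 : ℝ)) | ℱ n]) :
    ∀ᵐ ω ∂μ,
      (Tendsto (fun n => ∑ ℓ ∈ Finset.range n, Z ℓ ω) atTop atTop →
        Tendsto (fun n => (∑ ℓ ∈ Finset.range n, X ℓ ω * Y ℓ ω) /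
            (∑ ℓ ∈ Finset.range n, Z ℓ ω)) atTop (nhds (∫ ω', Y 0 ω' ∂μ))) ∧
      ((∃ L : ℝ, Tendsto (fun n => ∑ ℓ ∈ Finset.range n, Z ℓ ω) atTop (nhds L)) →
        ∃ B : ℝ, ∀ n, |∑ ℓ ∈ Finset.range n, X ℓ ω * Y ℓ ω| ≤ B) := by
  classical
  set mY : ℝ := ∫ ω', Y 0 ω' ∂μ with hmY_def
  set C : ℝ := ∫ ω', Y 0 ω' ^ 2 ∂μ with hC_def
  have hC0 : 0 ≤ C := integral_nonneg fun ω => sq_nonneg _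
  have hYsm0 : ∀ n, StronglyMeasurable (Y n) := fun n => (hYadapted n).mono (ℱ.le (n + 1))
  have hYmeas : ∀ n, Measurable (Y n) := fun n => (hYsm0 n).measurable
  have hXsm0 : ∀ n, StronglyMeasurable (X n) := fun n => (hXadapted n).mono (ℱ.le (n + 1))
  have hXmeas : ∀ n, Measurable (X n) := fun n => (hXsm0 n).measurable
  have hYint : ∀ n, Integrable (Y n) μ := fun n =>
    memLp_one_iff_integrable.1 ((hYL2 n).mono_exponent (by norm_num))
  have hY2int : ∀ n, Integrable (fun ω => Y n ω ^ 2) μ := fun n => (hYL2 n).integrable_sq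
  have hEY : ∀ n, ∫ ω, Y n ω ∂μ = mY := by
    intro n
    have h0 : ∫ ω, Y n ω ∂μ = ∫ x, x ∂(Measure.map (Y n) μ) :=
      (integral_map (hYmeas n).aemeasurable aestronglyMeasurable_id).symm
    have h1 : ∫ ω, Y 0 ω ∂μ = ∫ x, x ∂(Measure.map (Y 0) μ) :=
      (integral_map (hYmeas 0).aemeasurable aestronglyMeasurable_id).symm
    rw [hmY_def, h0, h1, hYdist n]
  have hEY2 : ∀ n, ∫ ω, Y n ω ^ 2 ∂μ = C := by
    intro n
    have hm : AEStronglyMeasurable (fun x : ℝ => x ^ 2) (Measure.map (Y n) μ) :=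
      (measurable_id.pow_const 2).aestronglyMeasurable
    have hm0 : AEStronglyMeasurable (fun x : ℝ => x ^ 2) (Measure.map (Y 0) μ) :=
      (measurable_id.pow_const 2).aestronglyMeasurable
    have h0 : ∫ ω, Y n ω ^ 2 ∂μ = ∫ x, x ^ 2 ∂(Measure.map (Y n) μ) :=
      (integral_map (hYmeas n).aemeasurable hm).symm
    have h1 : ∫ ω, Y 0 ω ^ 2 ∂μ = ∫ x, x ^ 2 ∂(Measure.map (Y 0) μ) :=
      (integral_map (hYmeas 0).aemeasurable hm0).symm
    rw [hC_def, h0, h1, hYdist n]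
  -- X as an indicator
  have hXind : ∀ n, X n = Set.indicator {ω | X n ω = 1} (fun _ => (1 : ℝ)) := by
    intro n; funext ω
    rcases hX01 n ω with h | h
    · rw [h, Set.indicator_apply]
      have : ω ∉ {ω' | X n ω' = 1} := by simp [Set.mem_setOf_eq, h]
      simp [this]
    · rw [h, Set.indicator_apply]
      have : ω ∈ {ω' | X n ω' = 1} := by simp [Set.mem_setOf_eq, h]
      simp [this]
  have hXabs : ∀ n ω, |X n ω| ≤ 1 := by
    intro n ω; rcases hX01 n ω with h | h <;> simp [h]
  have hcondX : ∀ n, μ[X n | ℱ n] = Z n := by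
    intro n
    conv_lhs => rw [hXind n]
    rw [hZ n]
  -- Z facts
  have hZsm : ∀ n, StronglyMeasurable[ℱ n] (Z n) := fun n => hZ n ▸ stronglyMeasurable_condExp
  have hZint : ∀ n, Integrable (Z n) μ := fun n => hZ n ▸ integrable_condExp
  have hindint : ∀ n, Integrable (Set.indicator {ω | X n ω = 1} (fun _ => (1 : ℝ))) μ := by
    intro n
    refine (integrable_const (1 : ℝ)).indicator ?_
    exact (hXmeas n) (measurableSet_singleton 1)
  have hZ01 : ∀ n, ∀ᵐ ω ∂μ, 0 ≤ Z n ω ∧ Z n ω ≤ 1 := by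
    intro n
    have h1 : (0 : Ω → ℝ) ≤ᵐ[μ] μ[Set.indicator {ω | X n ω = 1} (fun _ => (1 : ℝ)) | ℱ n] :=
      condExp_nonneg (Eventually.of_forall fun ω =>
        Set.indicator_nonneg (fun _ _ => zero_le_one) ω)
    have h2 : μ[Set.indicator {ω | X n ω = 1} (fun _ => (1 : ℝ)) | ℱ n]
        ≤ᵐ[μ] μ[(fun _ => (1 : ℝ)) | ℱ n] :=
      condExp_mono (hindint n) (integrable_const 1)
        (Eventually.of_forall fun ω =>
          Set.indicator_le' (fun _ _ => le_rfl) (fun _ _ => zero_le_one) ω)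
    have h3 : μ[(fun _ => (1 : ℝ)) | ℱ n] = fun _ => (1 : ℝ) := condExp_const (ℱ.le n) 1
    filter_upwards [h1, h2] with ω hω1 hω2
    rw [hZ n]
    refine ⟨hω1, ?_⟩
    calc (μ[Set.indicator {ω' | X n ω' = 1} (fun _ => (1 : ℝ)) | ℱ n]) ω
        ≤ (μ[(fun _ => (1 : ℝ)) | ℱ n]) ω := hω2
      _ = 1 := by rw [h3]
  -- the σ-algebra G n
  set G : ℕ → MeasurableSpace Ω :=
    fun n => ℱ n ⊔ MeasurableSpace.comap (X n) Real.measurableSpace with hG_def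
  have hGle : ∀ n, G n ≤ m0 := fun n =>
    sup_le (ℱ.le n) (measurable_iff_comap_le.1 (hXmeas n))
  haveI hGsf : ∀ n, SigmaFinite (μ.trim (hGle n)) := fun n => inferInstance
  have hYcm : ∀ n, Measurable[MeasurableSpace.comap (Y n) Real.measurableSpace] (Y n) :=
    fun n => measurable_iff_comap_le.2 le_rfl
  have hYG : ∀ n, μ[Y n | G n] =ᵐ[μ] fun _ => mY := by
    intro n
    have h := condExp_indep_eq (measurable_iff_comap_le.1 (hYmeas n)) (hGle n)
      (hYcm n).stronglyMeasurable (hindep n)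
    rw [hEY n] at h
    exact h
  have hY2G : ∀ n, μ[(fun ω => Y n ω ^ 2) | G n] =ᵐ[μ] fun _ => C := by
    intro n
    have hsm : StronglyMeasurable[MeasurableSpace.comap (Y n) Real.measurableSpace]
        (fun ω => Y n ω ^ 2) := ((hYcm n).pow_const 2).stronglyMeasurable
    have h := condExp_indep_eq (measurable_iff_comap_le.1 (hYmeas n)) (hGle n) hsm (hindep n)
    rw [hEY2 n] at h
    exact h
  have hFleG : ∀ n, (ℱ n : MeasurableSpace Ω) ≤ G n := by
    intro n; rw [hG_def]; exact le_sup_left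
  have hXleG : ∀ n, MeasurableSpace.comap (X n) Real.measurableSpace ≤ G n := by
    intro n; rw [hG_def]; exact le_sup_right
  have hXsmG : ∀ n, StronglyMeasurable[G n] (X n) := fun n =>
    (measurable_iff_comap_le.2 (hXleG n)).stronglyMeasurable
  have hXbnd : ∀ n, ∀ᵐ ω ∂μ, ‖X n ω‖ ≤ 1 := fun n =>
    Eventually.of_forall fun ω => by rw [Real.norm_eq_abs]; exact hXabs n ω
  have hZbnd : ∀ n, ∀ᵐ ω ∂μ, ‖Z n ω‖ ≤ 1 := by
    intro n
    filter_upwards [hZ01 n] with ω hω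
    rw [Real.norm_eq_abs, abs_le]
    exact ⟨by linarith [hω.1], hω.2⟩
  have heint : ∀ n, Integrable (fun ω => X n ω * Y n ω) μ := fun n =>
    (hYint n).bdd_mul (hXsm0 n).aestronglyMeasurable (hXbnd n)
  have he2int : ∀ n, Integrable (fun ω => X n ω * Y n ω ^ 2) μ := fun n =>
    (hY2int n).bdd_mul (hXsm0 n).aestronglyMeasurable (hXbnd n)
  -- conditional first moment
  have heF : ∀ n, μ[(fun ω => X n ω * Y n ω) | ℱ n] =ᵐ[μ] fun ω => mY * Z n ω := by
    intro n
    have hpull : μ[(fun ω => X n ω * Y n ω) | G n]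
        =ᵐ[μ] X n * μ[Y n | G n] :=
      condExp_stronglyMeasurable_mul_of_bound (hGle n) (hXsmG n) (hYint n) 1 (hXbnd n)
    have h2 : μ[(fun ω => X n ω * Y n ω) | G n] =ᵐ[μ] fun ω => mY * X n ω := by
      filter_upwards [hpull, hYG n] with ω hω1 hω2
      rw [hω1, Pi.mul_apply, hω2]
      ring
    have hsm_eq : (fun ω => mY * X n ω) = mY • X n := by funext ω; simp
    calc μ[(fun ω => X n ω * Y n ω) | ℱ n]
        =ᵐ[μ] μ[μ[(fun ω => X n ω * Y n ω) | G n] | ℱ n] :=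
          (condExp_condExp_of_le (hFleG n) (hGle n)).symm
      _ =ᵐ[μ] μ[(fun ω => mY * X n ω) | ℱ n] := condExp_congr_ae h2
      _ =ᵐ[μ] fun ω => mY * Z n ω := by
          rw [hsm_eq]
          refine (condExp_smul mY (X n) (ℱ n)).trans ?_
          rw [hcondX n]
          filter_upwards with ω
          simp
  -- conditional second moment pieces
  have he2F : ∀ n, μ[(fun ω => X n ω * Y n ω ^ 2) | ℱ n] =ᵐ[μ] fun ω => C * Z n ω := by
    intro n
    have hpull : μ[(fun ω => X n ω * Y n ω ^ 2) | G n]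
        =ᵐ[μ] X n * μ[(fun ω => Y n ω ^ 2) | G n] := by
      have := condExp_stronglyMeasurable_mul_of_bound (hGle n) (hXsmG n) (hY2int n) 1 (hXbnd n)
      exact this
    have h2 : μ[(fun ω => X n ω * Y n ω ^ 2) | G n] =ᵐ[μ] fun ω => C * X n ω := by
      filter_upwards [hpull, hY2G n] with ω hω1 hω2
      rw [hω1, Pi.mul_apply, hω2]
      ring
    have hsm_eq : (fun ω => C * X n ω) = C • X n := by funext ω; simp
    calc μ[(fun ω => X n ω * Y n ω ^ 2) | ℱ n]
        =ᵐ[μ] μ[μ[(fun ω => X n ω * Y n ω ^ 2) | G n] | ℱ n] :=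
          (condExp_condExp_of_le (hFleG n) (hGle n)).symm
      _ =ᵐ[μ] μ[(fun ω => C * X n ω) | ℱ n] := condExp_congr_ae h2
      _ =ᵐ[μ] fun ω => C * Z n ω := by
          rw [hsm_eq]
          refine (condExp_smul C (X n) (ℱ n)).trans ?_
          rw [hcondX n]
          filter_upwards with ω
          simp
  -- the martingale differences
  set d : ℕ → Ω → ℝ := fun n ω => X n ω * Y n ω - mY * Z n ω with hd_def
  have hd2 : ∀ n, MemLp (d n) 2 μ := by
    intro n
    have h1 : MemLp (fun ω => X n ω * Y n ω) 2 μ := by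
      refine ((hYL2 n).norm).mono'
        ((hXsm0 n).aestronglyMeasurable.mul (hYsm0 n).aestronglyMeasurable) ?_
      filter_upwards with ω
      rw [Real.norm_eq_abs, Real.norm_eq_abs, abs_mul]
      exact mul_le_of_le_one_left (abs_nonneg _) (hXabs n ω)
    have h2 : MemLp (fun ω => mY * Z n ω) 2 μ := by
      refine MemLp.of_bound
        ((((hZsm n).mono (ℱ.le n)).aestronglyMeasurable).const_mul mY) |mY| ?_
      filter_upwards [hZbnd n] with ω hω
      rw [Real.norm_eq_abs, abs_mul]
      calc |mY| * |Z n ω| ≤ |mY| * 1 := by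
            refine mul_le_mul_of_nonneg_left ?_ (abs_nonneg _)
            rw [Real.norm_eq_abs] at hω; exact hω
        _ = |mY| := mul_one _
    exact h1.sub h2
  have hdmeas : ∀ n, StronglyMeasurable[ℱ (n + 1)] (d n) := fun n =>
    ((hXadapted n).mul (hYadapted n)).sub
      (((hZsm n).mono (ℱ.mono n.le_succ)).const_mul mY)
  have hdcond : ∀ n, μ[d n | ℱ n] =ᵐ[μ] 0 := by
    intro n
    have hsub : μ[d n | ℱ n]
        =ᵐ[μ] μ[(fun ω => X n ω * Y n ω) | ℱ n] - μ[(fun ω => mY * Z n ω) | ℱ n] :=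
      condExp_sub (heint n) ((hZint n).const_mul mY) (ℱ n)
    have hmZ : μ[(fun ω => mY * Z n ω) | ℱ n] = fun ω => mY * Z n ω :=
      condExp_of_stronglyMeasurable (ℱ.le n) ((hZsm n).const_mul mY)
        ((hZint n).const_mul mY)
    refine hsub.trans ?_
    filter_upwards [heF n] with ω hω
    simp only [Pi.sub_apply, Pi.zero_apply, hmZ]
    rw [hω]
    ring
  have hd2cond : ∀ n, ∀ᵐ ω ∂μ, (μ[fun ω' => d n ω' ^ 2 | ℱ n]) ω ≤ C * Z n ω := by
    intro n
    set A : Ω → ℝ := fun ω => X n ω * Y n ω ^ 2 with hA_def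
    set Bf : Ω → ℝ := fun ω => Z n ω * (X n ω * Y n ω) with hB_def
    set Cf : Ω → ℝ := fun ω => mY ^ 2 * Z n ω ^ 2 with hCf_def
    have hq : (fun ω => d n ω ^ 2)
        = fun ω => (A ω - 2 * mY * Bf ω) + Cf ω := by
      funext ω
      rcases hX01 n ω with h | h <;>
        · simp only [hd_def, hA_def, hB_def, hCf_def, h]
          ring
    have hAint : Integrable A μ := he2int n
    have hBint : Integrable Bf μ :=
      (heint n).bdd_mul ((hZsm n).mono (ℱ.le n)).aestronglyMeasurable (hZbnd n)
    have hB2int : Integrable (fun ω => 2 * mY * Bf ω) μ := hBint.const_mul _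
    have hCint : Integrable Cf μ := by
      refine Integrable.mono' (integrable_const (mY ^ 2))
        ((((hZsm n).mono (ℱ.le n)).aestronglyMeasurable.pow 2).const_mul _) ?_
      filter_upwards [hZbnd n] with ω hω
      rw [Real.norm_eq_abs] at hω ⊢
      rw [hCf_def, abs_mul, abs_pow, abs_pow, sq_abs]
      calc mY ^ 2 * |Z n ω| ^ 2 ≤ mY ^ 2 * 1 := by
            refine mul_le_mul_of_nonneg_left ?_ (sq_nonneg _)
            nlinarith [abs_nonneg (Z n ω)]
        _ = mY ^ 2 := mul_one _
    have hsubint : Integrable (fun ω => A ω - 2 * mY * Bf ω) μ := hAint.sub hB2int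
    have hcondB : μ[Bf | ℱ n] =ᵐ[μ] fun ω => Z n ω * (mY * Z n ω) := by
      have hpull : μ[Z n * (fun ω => X n ω * Y n ω) | ℱ n]
          =ᵐ[μ] Z n * μ[(fun ω => X n ω * Y n ω) | ℱ n] :=
        condExp_stronglyMeasurable_mul_of_bound (ℱ.le n) (hZsm n) (heint n) 1 (hZbnd n)
      have hstep2 : (Z n * μ[(fun ω => X n ω * Y n ω) | ℱ n] : Ω → ℝ)
          =ᵐ[μ] fun ω => Z n ω * (mY * Z n ω) := by
        filter_upwards [heF n] with ω hω
        rw [Pi.mul_apply, hω]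
      exact hpull.trans hstep2
    have hcondB2 : μ[(fun ω => 2 * mY * Bf ω) | ℱ n]
        =ᵐ[μ] fun ω => 2 * mY * (Z n ω * (mY * Z n ω)) := by
      have hsm_eq : (fun ω => 2 * mY * Bf ω) = (2 * mY) • Bf := by funext ω; simp
      rw [hsm_eq]
      refine (condExp_smul (2 * mY) Bf (ℱ n)).trans ?_
      filter_upwards [hcondB] with ω hω
      simp only [Pi.smul_apply, smul_eq_mul]
      rw [hω]
    have hcondC : μ[Cf | ℱ n] = Cf :=
      condExp_of_stronglyMeasurable (ℱ.le n) (((hZsm n).pow 2).const_mul _) hCint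
    have hsplit : μ[fun ω' => d n ω' ^ 2 | ℱ n]
        =ᵐ[μ] μ[(fun ω => A ω - 2 * mY * Bf ω) | ℱ n] + μ[Cf | ℱ n] := by
      rw [hq]
      exact condExp_add hsubint hCint (ℱ n)
    have hsplit2 : μ[(fun ω => A ω - 2 * mY * Bf ω) | ℱ n]
        =ᵐ[μ] μ[A | ℱ n] - μ[(fun ω => 2 * mY * Bf ω) | ℱ n] :=
      condExp_sub hAint hB2int (ℱ n)
    filter_upwards [hsplit, hsplit2, he2F n, hcondB2] with ω h1 h2 h3 h4
    rw [h1, Pi.add_apply, h2, Pi.sub_apply, h3, h4, hcondC]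
    simp only [hCf_def]
    nlinarith [sq_nonneg (mY * Z n ω)]
  -- the weight processes
  set T : ℕ → Ω → ℝ := fun n ω => ∑ ℓ ∈ Finset.range n, |Z ℓ ω| with hT_def
  have hTnonneg : ∀ n ω, 0 ≤ T n ω := fun n ω =>
    Finset.sum_nonneg fun ℓ _ => abs_nonneg _
  have hTmono : ∀ ω, Monotone fun n => T n ω := by
    intro ω
    refine monotone_nat_of_le_succ fun n => ?_
    rw [hT_def]
    simp only
    rw [Finset.sum_range_succ]
    linarith [abs_nonneg (Z n ω)]
  have hTstep : ∀ n ω, T (n + 1) ω = T n ω + |Z n ω| := by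
    intro n ω; rw [hT_def]; simp only; rw [Finset.sum_range_succ]
  have hTsmF : ∀ n, StronglyMeasurable[ℱ n] (T (n + 1)) := by
    intro n
    refine Finset.stronglyMeasurable_fun_sum _ fun ℓ hℓ => ?_
    have hℓn : ℓ ≤ n := Nat.lt_succ_iff.1 (Finset.mem_range.1 hℓ)
    exact ((hZsm ℓ).mono (ℱ.mono hℓn)).norm
  have hTmeasF : ∀ n, Measurable[ℱ n] (T (n + 1)) := fun n => (hTsmF n).measurable
  set g1 : ℕ → Ω → ℝ := fun n ω => (1 + T (n + 1) ω)⁻¹ with hg1_def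
  have hg1meas : ∀ n, StronglyMeasurable[ℱ n] (g1 n) := by
    intro n
    have h : Measurable[ℱ n] fun ω => (1 + T (n + 1) ω)⁻¹ :=
      (((hTmeasF n).const_add 1).inv)
    exact h.stronglyMeasurable
  have hg1pos : ∀ n ω, 1 ≤ 1 + T (n + 1) ω := fun n ω => by linarith [hTnonneg (n + 1) ω]
  have hg1bdd : ∀ n ω, |g1 n ω| ≤ 1 := by
    intro n ω
    rw [hg1_def]
    simp only
    rw [abs_of_nonneg (inv_nonneg.2 (by linarith [hTnonneg (n + 1) ω]))]
    exact inv_le_one_of_one_le₀ (hg1pos n ω)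
  have hsum1 : ∀ n ω, ∑ ℓ ∈ Finset.range n, g1 ℓ ω ^ 2 * Z ℓ ω ≤ 1 := by
    intro n ω
    have key : ∀ ℓ, g1 ℓ ω ^ 2 * Z ℓ ω
        ≤ (1 + T ℓ ω)⁻¹ - (1 + T (ℓ + 1) ω)⁻¹ := by
      intro ℓ
      have ha : (1:ℝ) ≤ 1 + T ℓ ω := by linarith [hTnonneg ℓ ω]
      have hb : (1:ℝ) ≤ 1 + T (ℓ + 1) ω := hg1pos ℓ ω
      have ha0 : (0:ℝ) < 1 + T ℓ ω := lt_of_lt_of_le zero_lt_one ha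
      have hb0 : (0:ℝ) < 1 + T (ℓ + 1) ω := lt_of_lt_of_le zero_lt_one hb
      have hab : 1 + T ℓ ω ≤ 1 + T (ℓ + 1) ω := by
        linarith [hTstep ℓ ω, abs_nonneg (Z n ω), abs_nonneg (Z ℓ ω)]
      have h1 : g1 ℓ ω ^ 2 * Z ℓ ω ≤ g1 ℓ ω ^ 2 * |Z ℓ ω| :=
        mul_le_mul_of_nonneg_left (le_abs_self _) (sq_nonneg _)
      have h2 : g1 ℓ ω ^ 2 * |Z ℓ ω|
          = |Z ℓ ω| / ((1 + T (ℓ + 1) ω) * (1 + T (ℓ + 1) ω)) := by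
        rw [hg1_def]
        simp only
        rw [div_eq_mul_inv, mul_inv, sq]
        ring
      have h3 : |Z ℓ ω| / ((1 + T (ℓ + 1) ω) * (1 + T (ℓ + 1) ω))
          ≤ |Z ℓ ω| / ((1 + T ℓ ω) * (1 + T (ℓ + 1) ω)) := by
        gcongr
      have h4 : |Z ℓ ω| / ((1 + T ℓ ω) * (1 + T (ℓ + 1) ω))
          = (1 + T ℓ ω)⁻¹ - (1 + T (ℓ + 1) ω)⁻¹ := by
        rw [inv_sub_inv ha0.ne' hb0.ne']
        congr 1
        rw [hTstep ℓ ω]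
        ring
      calc g1 ℓ ω ^ 2 * Z ℓ ω ≤ g1 ℓ ω ^ 2 * |Z ℓ ω| := h1
        _ = |Z ℓ ω| / ((1 + T (ℓ + 1) ω) * (1 + T (ℓ + 1) ω)) := h2
        _ ≤ |Z ℓ ω| / ((1 + T ℓ ω) * (1 + T (ℓ + 1) ω)) := h3
        _ = (1 + T ℓ ω)⁻¹ - (1 + T (ℓ + 1) ω)⁻¹ := h4
    calc ∑ ℓ ∈ Finset.range n, g1 ℓ ω ^ 2 * Z ℓ ω
        ≤ ∑ ℓ ∈ Finset.range n, ((1 + T ℓ ω)⁻¹ - (1 + T (ℓ + 1) ω)⁻¹) :=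
          Finset.sum_le_sum fun ℓ _ => key ℓ
      _ = (1 + T 0 ω)⁻¹ - (1 + T n ω)⁻¹ := Finset.sum_range_sub' _ _
      _ ≤ 1 := by
          have hT0 : T 0 ω = 0 := by rw [hT_def]; simp
          have h5 : (0:ℝ) ≤ (1 + T n ω)⁻¹ :=
            inv_nonneg.2 (by linarith [hTnonneg n ω])
          rw [hT0, add_zero, inv_one]
          linarith
  have A1 := aux_martconv μ ℱ d Z g1 C 1 hC0 hd2 hdmeas hdcond hZint hd2cond
    hg1meas hg1bdd hsum1
  -- indicator weights for part (ii)
  set g2 : ℕ → ℕ → Ω → ℝ :=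
    fun K n ω => Set.indicator {ω' | T (n + 1) ω' ≤ (K : ℝ)} (fun _ => (1 : ℝ)) ω
    with hg2_def
  have hg2meas : ∀ K n, StronglyMeasurable[ℱ n] (g2 K n) := by
    intro K n
    exact stronglyMeasurable_const.indicator (measurableSet_le (hTmeasF n) measurable_const)
  have hg2bdd : ∀ K n ω, |g2 K n ω| ≤ 1 := by
    intro K n ω
    rw [hg2_def]
    simp only
    by_cases h : ω ∈ {ω' | T (n + 1) ω' ≤ (K : ℝ)}
    · rw [Set.indicator_of_mem h]; norm_num
    · rw [Set.indicator_of_notMem h]; norm_num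
  have hg2sq : ∀ K n ω, g2 K n ω ^ 2 = g2 K n ω := by
    intro K n ω
    rw [hg2_def]
    simp only
    by_cases h : ω ∈ {ω' | T (n + 1) ω' ≤ (K : ℝ)}
    · rw [Set.indicator_of_mem h]; norm_num
    · rw [Set.indicator_of_notMem h]; norm_num
  have hsum2 : ∀ (K : ℕ) n ω, ∑ ℓ ∈ Finset.range n, g2 K ℓ ω ^ 2 * Z ℓ ω ≤ (K : ℝ) := by
    intro K n ω
    have inv : ∀ n', ∑ ℓ ∈ Finset.range n', g2 K ℓ ω * |Z ℓ ω| ≤ min (T n' ω) (K : ℝ) := by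
      intro n'
      induction n' with
      | zero =>
          simp only [Finset.range_zero, Finset.sum_empty]
          refine le_min ?_ (by positivity)
          rw [hT_def]; simp
      | succ n' ih =>
          rw [Finset.sum_range_succ]
          by_cases h : ω ∈ {ω' | T (n' + 1) ω' ≤ (K : ℝ)}
          · have hg : g2 K n' ω = 1 := by rw [hg2_def]; simp only; rw [Set.indicator_of_mem h]
            have hTK : T (n' + 1) ω ≤ (K : ℝ) := h
            refine le_min ?_ ?_
            · calc ∑ ℓ ∈ Finset.range n', g2 K ℓ ω * |Z ℓ ω| + g2 K n' ω * |Z n' ω|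
                  ≤ min (T n' ω) (K : ℝ) + |Z n' ω| := by
                    rw [hg, one_mul]; linarith [ih]
                _ ≤ T n' ω + |Z n' ω| := by
                    have := min_le_left (T n' ω) (K : ℝ); linarith
                _ = T (n' + 1) ω := (hTstep n' ω).symm
            · calc ∑ ℓ ∈ Finset.range n', g2 K ℓ ω * |Z ℓ ω| + g2 K n' ω * |Z n' ω|
                  ≤ min (T n' ω) (K : ℝ) + |Z n' ω| := by
                    rw [hg, one_mul]; linarith [ih]
                _ ≤ T n' ω + |Z n' ω| := by
                    have := min_le_left (T n' ω) (K : ℝ); linarith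
                _ = T (n' + 1) ω := (hTstep n' ω).symm
                _ ≤ (K : ℝ) := hTK
          · have hg : g2 K n' ω = 0 := by
              rw [hg2_def]; simp only; rw [Set.indicator_of_notMem h]
            rw [hg, zero_mul, add_zero]
            refine ih.trans (min_le_min ?_ le_rfl)
            exact hTmono ω (Nat.le_succ n')
    calc ∑ ℓ ∈ Finset.range n, g2 K ℓ ω ^ 2 * Z ℓ ω
        ≤ ∑ ℓ ∈ Finset.range n, g2 K ℓ ω * |Z ℓ ω| := by
          refine Finset.sum_le_sum fun ℓ _ => ?_
          rw [hg2sq K ℓ ω]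
          refine mul_le_mul_of_nonneg_left (le_abs_self _) ?_
          rw [← hg2sq K ℓ ω]; exact sq_nonneg _
      _ ≤ min (T n ω) (K : ℝ) := inv n
      _ ≤ (K : ℝ) := min_le_right _ _
  have A2 : ∀ᵐ ω ∂μ, ∀ K : ℕ, ∃ c,
      Tendsto (fun n => ∑ ℓ ∈ Finset.range n, g2 K ℓ ω * d ℓ ω) atTop (𝓝 c) :=
    ae_all_iff.2 fun K => aux_martconv μ ℱ d Z (g2 K) C K hC0 hd2 hdmeas hdcond hZint
      hd2cond (hg2meas K) (hg2bdd K) (hsum2 K)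
  -- final pointwise argument
  filter_upwards [A1, A2, ae_all_iff.2 hZ01] with ω hN hA2 hZω
  have hTS : ∀ n, T n ω = ∑ ℓ ∈ Finset.range n, Z ℓ ω := fun n =>
    Finset.sum_congr rfl fun ℓ _ => abs_of_nonneg (hZω ℓ).1
  have hMd : ∀ n, ∑ ℓ ∈ Finset.range n, d ℓ ω
      = (∑ ℓ ∈ Finset.range n, X ℓ ω * Y ℓ ω) - mY * ∑ ℓ ∈ Finset.range n, Z ℓ ω := by
    intro n
    rw [Finset.mul_sum, ← Finset.sum_sub_distrib]
  constructor
  · intro hStop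
    set S : ℕ → ℝ := fun n => ∑ ℓ ∈ Finset.range n, Z ℓ ω with hS_def
    set b : ℕ → ℝ := fun n => 1 + T n ω with hb_def
    have hb1 : ∀ n, 1 ≤ b n := fun n => by
      rw [hb_def]; simp only; linarith [hTnonneg n ω]
    have hbmono : Monotone b := fun i j h => by
      rw [hb_def]; simp only; linarith [hTmono ω h]
    have hbtop : Tendsto b atTop atTop := by
      rw [hb_def]
      refine tendsto_atTop_add_const_left _ 1 ?_
      exact hStop.congr fun n => (hTS n).symm
    obtain ⟨c0, hc0⟩ := hN
    have hdb : ∀ ℓ, d ℓ ω = b (ℓ + 1) * (g1 ℓ ω * d ℓ ω) := by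
      intro ℓ
      have hbne : b (ℓ + 1) ≠ 0 := by
        have := hb1 (ℓ + 1); intro hcon; rw [hcon] at this; norm_num at this
      have hg1b : g1 ℓ ω = (b (ℓ + 1))⁻¹ := rfl
      rw [hg1b, ← mul_assoc, mul_inv_cancel₀ hbne, one_mul]
    have hkron := kronecker hbmono hb1 hbtop hc0
    have hkron' : Tendsto (fun n => (∑ ℓ ∈ Finset.range n, d ℓ ω) / b n) atTop (𝓝 0) := by
      refine hkron.congr fun n => ?_
      congr 1
      exact Finset.sum_congr rfl fun ℓ _ => (hdb ℓ).symm
    have hS1 : ∀ᶠ n in atTop, 1 ≤ S n := hStop.eventually_ge_atTop 1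
    have hinvS : Tendsto (fun n => (S n)⁻¹) atTop (𝓝 0) := hStop.inv_tendsto_atTop
    have hbS : Tendsto (fun n => b n / S n) atTop (𝓝 1) := by
      have h1 : Tendsto (fun n => (S n)⁻¹ + 1) atTop (𝓝 1) := by
        have := hinvS.add (tendsto_const_nhds (x := (1:ℝ)))
        rwa [zero_add] at this
      refine Tendsto.congr' ?_ h1
      filter_upwards [hS1] with n hn
      have hSne : S n ≠ 0 := ne_of_gt (lt_of_lt_of_le zero_lt_one hn)
      rw [hb_def]
      simp only
      rw [hTS n]
      field_simp
      rfl
    have hMS : Tendsto (fun n => (∑ ℓ ∈ Finset.range n, d ℓ ω) / S n) atTop (𝓝 0) := by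
      have hmul := hkron'.mul hbS
      rw [zero_mul] at hmul
      refine hmul.congr fun n => ?_
      by_cases hSn : S n = 0
      · simp [hSn]
      · have hbne : b n ≠ 0 := by
          have := hb1 n; intro hcon; rw [hcon] at this; norm_num at this
        rw [div_mul_div_comm, mul_comm (∑ ℓ ∈ Finset.range n, d ℓ ω) (b n),
          mul_div_mul_left _ _ hbne]
    have hfinal : Tendsto (fun n => (∑ ℓ ∈ Finset.range n, d ℓ ω) / S n + mY)
        atTop (𝓝 mY) := by
      have := hMS.add (tendsto_const_nhds (x := mY))
      rwa [zero_add] at this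
    refine Tendsto.congr' ?_ hfinal
    filter_upwards [hS1] with n hn
    have hSne : S n ≠ 0 := ne_of_gt (lt_of_lt_of_le zero_lt_one hn)
    rw [hMd n]
    field_simp
    change _ = _ / S n
    field_simp
    ring
  · rintro ⟨L, hL⟩
    set S : ℕ → ℝ := fun n => ∑ ℓ ∈ Finset.range n, Z ℓ ω with hS_def
    have hSmono : Monotone S := by
      refine monotone_nat_of_le_succ fun n => ?_
      rw [hS_def]
      simp only
      rw [Finset.sum_range_succ]
      linarith [(hZω n).1]
    have hSleL : ∀ n, S n ≤ L := fun n => hSmono.ge_of_tendsto hL n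
    obtain ⟨cK, hcK⟩ := hA2 ⌈L⌉₊
    have hg2one : ∀ ℓ, g2 ⌈L⌉₊ ℓ ω = 1 := by
      intro ℓ
      rw [hg2_def]
      simp only
      refine Set.indicator_of_mem ?_ _
      show T (ℓ + 1) ω ≤ ((⌈L⌉₊ : ℕ) : ℝ)
      rw [hTS]
      exact (hSleL (ℓ + 1)).trans (Nat.le_ceil L)
    have hMconv : Tendsto (fun n => ∑ ℓ ∈ Finset.range n, d ℓ ω) atTop (𝓝 cK) := by
      refine hcK.congr fun n => Finset.sum_congr rfl fun ℓ _ => ?_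
      rw [hg2one ℓ, one_mul]
    have hXYconv : Tendsto (fun n => ∑ ℓ ∈ Finset.range n, X ℓ ω * Y ℓ ω)
        atTop (𝓝 (cK + mY * L)) := by
      have := hMconv.add (hL.const_mul mY)
      refine this.congr fun n => ?_
      rw [hMd n]
      ring
    obtain ⟨B, hB⟩ := (hXYconv.norm).bddAbove_range
    refine ⟨B, fun n => ?_⟩
    have := hB (Set.mem_range_self n)
    rwa [Real.norm_eq_abs] at this
end

section
/- Let k ≥ 2, let I* ∈ {1, …, k}, and let (ψ_n)_{n ≥ 1} be a sequence of nonnegative vectors in ℝᵏ with Σ_{i=1}^{k} ψ_{n,i} = 1 for every n. Define the running averages ψ̄_{n,i} := (1/n)·Σ_{ℓ=1}^{n} ψ_{ℓ,i}. Let ψ* ∈ ℝᵏ be a nonnegative vector with Σ_{i=1}^{k} ψ*_i = 1. If ψ̄_{n,I*} → ψ*_{I*} as n → ∞, and for every j ≠ I* and every δ > 0 the series Σ_{n=1}^{∞} ψ_{n,j}·𝟙[ψ̄_{n,j} ≥ ψ*_j + δ] is finite, then ψ̄_{n,i} → ψ*_i as n → ∞ for every i ∈ {1, …, k}. -/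
open Filter

open Finset in
lemma key_lemma (ψ : ℕ → ℝ) (hnn : ∀ n, 0 ≤ ψ n) (c δ : ℝ) (hc : 0 < c) (hδ : 0 < δ)
    (hsum : Summable (fun n : ℕ =>
      Set.indicator {m : ℕ | c ≤ (∑ ℓ ∈ Finset.range (m + 1), ψ ℓ) / (m + 1)}
        (fun m => ψ m) n)) :
    ∀ᶠ n in atTop, (∑ ℓ ∈ Finset.range n, ψ ℓ) / n < c + δ := by
  set S : ℕ → ℝ := fun n => ∑ ℓ ∈ Finset.range n, ψ ℓ with hS
  set f : ℕ → ℝ := fun n =>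
    Set.indicator {m : ℕ | c ≤ (∑ ℓ ∈ Finset.range (m + 1), ψ ℓ) / (m + 1)}
      (fun m => ψ m) n with hf
  have hf_nonneg : ∀ n, 0 ≤ f n := fun n =>
    Set.indicator_nonneg (fun m _ => hnn m) n
  have hf_eq : ∀ n : ℕ, c ≤ S (n + 1) / ((n : ℝ) + 1) → f n = ψ n := by
    intro n hn
    apply Set.indicator_of_mem
    simpa [hS] using hn
  -- Step B1 packaged: if eventually c ≤ S n / n then contradiction
  have hlow : ∃ᶠ n in atTop, S n / n < c := by
    by_contra hcon
    rw [Filter.not_frequently] at hcon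
    simp only [not_lt] at hcon
    obtain ⟨N0, hN0⟩ := eventually_atTop.1 hcon
    have hψsum : Summable ψ := by
      have h1 : Summable (fun m => f (m + N0)) := (summable_nat_add_iff N0).2 hsum
      have h2 : Summable (fun m => ψ (m + N0)) := by
        apply h1.congr
        intro m
        have h := hN0 (m + N0 + 1) (by omega)
        push_cast at h
        exact hf_eq (m + N0) (by push_cast; convert h using 2)
      exact (summable_nat_add_iff N0).1 h2
    set B := ∑' n, ψ n with hB
    have hSB : ∀ n, S n ≤ B := fun n => Summable.sum_le_tsum (range n) (fun i _ => hnn i) hψsum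
    set n := max N0 (⌊B / c⌋₊ + 1) with hn
    have hn1 : 1 ≤ n := le_trans (by omega) (le_max_right _ _)
    have hnpos : (0:ℝ) < n := by exact_mod_cast hn1
    have h1 : c ≤ S n / n := hN0 n (le_max_left _ _)
    have h2 : c * n ≤ S n := by
      rw [le_div_iff₀ hnpos] at h1; exact h1
    have h3 : B / c < n := by
      calc B / c < ⌊B / c⌋₊ + 1 := Nat.lt_floor_add_one _
        _ ≤ n := by exact_mod_cast le_max_right N0 (⌊B / c⌋₊ + 1)
    have h4 : B < c * n := by
      rw [div_lt_iff₀ hc] at h3; linarith [h3]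
    linarith [hSB n, h2, h4]
  by_contra hcon
  rw [Filter.not_eventually] at hcon
  simp only [not_lt] at hcon
  -- Step A: tail bound
  have hC : CauchySeq (fun n => ∑ m ∈ range n, f m) := hsum.hasSum.tendsto_sum_nat.cauchySeq
  rw [Metric.cauchySeq_iff'] at hC
  obtain ⟨M, hM⟩ := hC δ hδ
  have htail : ∀ N, ∑ m ∈ Finset.Ico M N, f m < δ := by
    intro N
    rcases le_or_gt N M with h | h
    · rw [Finset.Ico_eq_empty (by omega)]
      simpa using hδ
    · have h1 := hM N h.le
      rw [Real.dist_eq] at h1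
      have h2 : ∑ m ∈ range N, f m - ∑ m ∈ range M, f m < δ := (le_abs_self _).trans_lt h1
      rw [Finset.sum_Ico_eq_sub _ h.le]
      exact h2
  -- pick m' ≥ M with S m'/m' < c
  obtain ⟨m', hm'M, hm'lt⟩ := (frequently_atTop.1 hlow) M
  -- pick m1 ≥ m'+1 with c + δ ≤ S m1/m1
  obtain ⟨m1, hm1ge, hm1⟩ := (frequently_atTop.1 hcon) (m' + 1)
  have hm'm1 : m' < m1 := by omega
  set T := (Finset.Ico m' m1).filter (fun m => S m / m < c) with hT
  have hTne : T.Nonempty := ⟨m', by simp [hT, Finset.mem_Ico, hm'm1, hm'lt]⟩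
  set m0 := T.max' hTne with hm0
  have hm0mem : m0 ∈ T := T.max'_mem hTne
  have hm0Ico : m0 ∈ Finset.Ico m' m1 := Finset.mem_filter.1 hm0mem |>.1
  have hm0lt : S m0 / m0 < c := (Finset.mem_filter.1 hm0mem).2
  have hm0ge : m' ≤ m0 := (Finset.mem_Ico.1 hm0Ico).1
  have hm0m1 : m0 < m1 := (Finset.mem_Ico.1 hm0Ico).2
  have hmid : ∀ n, m0 < n → n ≤ m1 → c ≤ S n / n := by
    intro n h1 h2
    rcases eq_or_lt_of_le h2 with rfl | h3
    · linarith [hm1]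
    · by_contra h4
      push_neg at h4
      have : n ∈ T := Finset.mem_filter.2 ⟨Finset.mem_Ico.2 ⟨by omega, h3⟩, h4⟩
      exact absurd (T.le_max' n this) (by omega)
  have hblock_eq : ∀ ℓ ∈ Finset.Ico m0 m1, f ℓ = ψ ℓ := by
    intro ℓ hℓ
    rw [Finset.mem_Ico] at hℓ
    apply hf_eq
    have h := hmid (ℓ + 1) (by omega) (by omega)
    push_cast at h
    exact h
  have hm1pos : (0:ℝ) < (m1:ℝ) := by exact_mod_cast (by omega : 0 < m1)
  have hS1 : (c + δ) * m1 ≤ S m1 := by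
    rw [← le_div_iff₀ hm1pos]; exact hm1
  have hS0 : S m0 ≤ c * m0 := by
    rcases Nat.eq_zero_or_pos m0 with h | h
    · simp [h, hS]
    · have hp : (0:ℝ) < (m0:ℝ) := by exact_mod_cast h
      rw [div_lt_iff₀ hp] at hm0lt
      linarith
  have hblock : ∑ ℓ ∈ Finset.Ico m0 m1, f ℓ = S m1 - S m0 := by
    rw [Finset.sum_congr rfl hblock_eq, Finset.sum_Ico_eq_sub _ hm0m1.le]
  have hm01 : (m0:ℝ) ≤ (m1:ℝ) := by exact_mod_cast hm0m1.le
  have h1m1 : (1:ℝ) ≤ (m1:ℝ) := by exact_mod_cast (by omega : 1 ≤ m1)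
  have hge : δ ≤ ∑ ℓ ∈ Finset.Ico m0 m1, f ℓ := by
    rw [hblock]; nlinarith
  have hle : ∑ ℓ ∈ Finset.Ico m0 m1, f ℓ ≤ ∑ ℓ ∈ Finset.Ico M m1, f ℓ := by
    apply Finset.sum_le_sum_of_subset_of_nonneg
    · apply Finset.Ico_subset_Ico (by omega) le_rfl
    · intro i _ _; exact hf_nonneg i
  linarith [htail m1]

/-- Sufficient condition for convergence of average allocations.  Sequences
are 0-indexed: `ψ n` is the paper's `ψ_{n+1}` and the running average
`ψ̄_{n} = (1/n) Σ_{ℓ=1}^{n} ψ_ℓ` is `(Σ_{ℓ ∈ range n} ψ ℓ i)/n`; the term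
`ψ_{n,j}` is paired with the average `ψ̄_{n,j}` that includes it, i.e. with
index `n + 1`.  If `ψ̄_{n,I*} → ψ*_{I*}` and, for every `j ≠ I*` and `δ > 0`,
`Σ_n ψ_{n,j}·𝟙[ψ̄_{n,j} ≥ ψ*_j + δ] < ∞`, then `ψ̄_{n,i} → ψ*_i` for all `i`. -/
theorem stmt_11 (k : ℕ) (hk : 2 ≤ k) (Istar : Fin k)
    (ψ : ℕ → Fin k → ℝ) (hnn : ∀ n i, 0 ≤ ψ n i) (hsum : ∀ n, (∑ i, ψ n i) = 1)
    (ψstar : Fin k → ℝ) (hsnn : ∀ i, 0 ≤ ψstar i) (hssum : (∑ i, ψstar i) = 1)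
    (hconv : Tendsto (fun n : ℕ => (∑ ℓ ∈ Finset.range n, ψ ℓ Istar) / n)
      atTop (nhds (ψstar Istar)))
    (hfin : ∀ j, j ≠ Istar → ∀ δ : ℝ, 0 < δ →
      Summable (fun n : ℕ =>
        Set.indicator {m : ℕ | ψstar j + δ ≤ (∑ ℓ ∈ Finset.range (m + 1), ψ ℓ j) / (m + 1)}
          (fun m => ψ m j) n)) :
    ∀ i, Tendsto (fun n : ℕ => (∑ ℓ ∈ Finset.range n, ψ ℓ i) / n)
      atTop (nhds (ψstar i)) := by
  have upperAll : ∀ j, ∀ ε : ℝ, 0 < ε → ∀ᶠ n in atTop,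
      (∑ ℓ ∈ Finset.range n, ψ ℓ j) / n < ψstar j + ε := by
    intro j ε hε
    by_cases hj : j = Istar
    · subst hj
      exact hconv.eventually_lt_const (by linarith)
    · have h2 : (0:ℝ) < ψstar j + ε / 2 := by
        have := hsnn j; linarith
      have hkey := key_lemma (fun n => ψ n j) (fun n => hnn n j) (ψstar j + ε / 2) (ε / 2)
        h2 (half_pos hε) (hfin j hj (ε / 2) (half_pos hε))
      filter_upwards [hkey] with n hn
      linarith
  intro i
  by_cases hi : i = Istar
  · subst hi; exact hconv
  rw [tendsto_order]
  constructor
  · -- lower bound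
    intro a ha
    set ε := ψstar i - a with hε
    have hεpos : 0 < ε := by linarith
    have hkpos : (0:ℝ) < k := by exact_mod_cast (by omega : 0 < k)
    have hεk : 0 < ε / k := div_pos hεpos hkpos
    have hall : ∀ᶠ n in atTop, ∀ j ∈ Finset.univ.erase i,
        (∑ ℓ ∈ Finset.range n, ψ ℓ j) / n < ψstar j + ε / k :=
      (Filter.eventually_all_finset _).2 fun j _ => upperAll j (ε / k) hεk
    filter_upwards [hall, eventually_ge_atTop 1] with n hn hn1
    have hnpos : (0:ℝ) < (n:ℝ) := by exact_mod_cast hn1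
    -- sum over all coordinates is 1
    have htot : ∑ j, (∑ ℓ ∈ Finset.range n, ψ ℓ j) / n = 1 := by
      rw [← Finset.sum_div]
      rw [Finset.sum_comm]
      simp only [hsum]
      rw [Finset.sum_const, Finset.card_range, nsmul_eq_mul, mul_one]
      field_simp
    have hne : (Finset.univ.erase i).Nonempty := by
      have : 1 ≤ (Finset.univ.erase i).card := by
        rw [Finset.card_erase_of_mem (Finset.mem_univ i), Finset.card_univ, Fintype.card_fin]
        omega
      exact Finset.card_pos.1 (by omega)
    have hlt : ∑ j ∈ Finset.univ.erase i, (∑ ℓ ∈ Finset.range n, ψ ℓ j) / n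
        < ∑ j ∈ Finset.univ.erase i, (ψstar j + ε / k) := by
      exact Finset.sum_lt_sum_of_nonempty hne fun j hj => hn j hj
    have hcard : (Finset.univ.erase i).card = k - 1 := by
      rw [Finset.card_erase_of_mem (Finset.mem_univ i), Finset.card_univ, Fintype.card_fin]
    have hrhs : ∑ j ∈ Finset.univ.erase i, (ψstar j + ε / k)
        = (1 - ψstar i) + (k - 1 : ℕ) * (ε / k) := by
      rw [Finset.sum_add_distrib, Finset.sum_const, hcard, nsmul_eq_mul]
      have : ∑ j ∈ Finset.univ.erase i, ψstar j = 1 - ψstar i := by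
        have := Finset.sum_erase_add Finset.univ ψstar (Finset.mem_univ i)
        rw [hssum] at this
        linarith
      rw [this]
    have hbound : ((k - 1 : ℕ) : ℝ) * (ε / k) < ε := by
      have h1 : ((k - 1 : ℕ) : ℝ) < (k : ℝ) := by
        exact_mod_cast (by omega : k - 1 < k)
      calc ((k - 1 : ℕ) : ℝ) * (ε / k) < (k : ℝ) * (ε / k) := by
            apply mul_lt_mul_of_pos_right h1 hεk
        _ = ε := by field_simp
    have hsplit : (∑ ℓ ∈ Finset.range n, ψ ℓ i) / n
        = 1 - ∑ j ∈ Finset.univ.erase i, (∑ ℓ ∈ Finset.range n, ψ ℓ j) / n := by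
      have := Finset.sum_erase_add Finset.univ
        (fun j => (∑ ℓ ∈ Finset.range n, ψ ℓ j) / n) (Finset.mem_univ i)
      rw [htot] at this
      linarith
    rw [hsplit]
    calc a = ψstar i - ε := by rw [hε]; ring
      _ < 1 - ((1 - ψstar i) + (k - 1 : ℕ) * (ε / k)) := by linarith
      _ ≤ 1 - ∑ j ∈ Finset.univ.erase i, (∑ ℓ ∈ Finset.range n, ψ ℓ j) / n := by
          rw [← hrhs]; linarith
  · intro a ha
    filter_upwards [upperAll i (a - ψstar i) (by linarith)] with n hn
    linarith
end

section
/- Let Θ̃ be a nonempty bounded open subset of ℝᵏ, and let (W_n)_{n ≥ 1} be a sequence of continuous functions from the closure of Θ̃ to [0, ∞) that is uniformly equicontinuous in the following sense: for every ε > 0 there exists δ > 0 such that for all n and all θ, θ' in the closure of Θ̃ with ‖θ - θ'‖_∞ ≤ δ, one has |W_n(θ) - W_n(θ')| ≤ ε. Then (1/n)·log( ∫_{Θ̃} exp(-n·W_n(θ)) dθ ) + inf_{θ ∈ Θ̃} W_n(θ) → 0 as n → ∞, where the integral is with respect to Lebesgue measure on ℝᵏ. -/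
set_option maxHeartbeats 1000000


open MeasureTheory Filter

/-- Uniform lower bound for the volume of `Θt ∩ ball θ δ` over `θ` in the
(compact) closure of `Θt`. -/
lemma stmt_14_cover {k : ℕ} (Θt : Set (Fin k → ℝ)) (hne : Θt.Nonempty)
    (hopen : IsOpen Θt) (hbdd : Bornology.IsBounded Θt) {δ : ℝ} (hδ : 0 < δ) :
    ∃ c : ℝ, 0 < c ∧ ∀ θ ∈ closure Θt,
      c ≤ (volume (Θt ∩ Metric.ball θ δ)).toReal := by
  classical
  have hK : IsCompact (closure Θt) := hbdd.isCompact_closure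
  have hTfin : volume Θt < ⊤ :=
    lt_of_le_of_lt (measure_mono subset_closure) hK.measure_lt_top
  have hcov : closure Θt ⊆ ⋃ x ∈ closure Θt, Metric.ball x (δ / 2) := by
    intro x hx
    exact Set.mem_biUnion hx (Metric.mem_ball_self (by linarith))
  obtain ⟨t, htsub, hcover⟩ := hK.elim_nhds_subcover (fun x => Metric.ball x (δ / 2))
    (fun x _ => Metric.ball_mem_nhds x (by linarith))
  have htne : t.Nonempty := by
    rcases hne with ⟨θ, hθ⟩
    have := hcover (subset_closure hθ)
    simp only [Set.mem_iUnion] at this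
    obtain ⟨x, hx, -⟩ := this
    exact ⟨x, hx⟩
  set f : (Fin k → ℝ) → ℝ := fun x => (volume (Θt ∩ Metric.ball x (δ / 2))).toReal with hf
  refine ⟨t.inf' htne f, ?_, ?_⟩
  · rw [Finset.lt_inf'_iff]
    intro x hx
    have hxcl : x ∈ closure Θt := htsub x hx
    have hopen' : IsOpen (Θt ∩ Metric.ball x (δ / 2)) := hopen.inter Metric.isOpen_ball
    have hne' : (Θt ∩ Metric.ball x (δ / 2)).Nonempty := by
      have := mem_closure_iff.mp hxcl (Metric.ball x (δ / 2)) Metric.isOpen_ball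
        (Metric.mem_ball_self (by linarith : (0:ℝ) < δ / 2))
      obtain ⟨y, hy1, hy2⟩ := this
      exact ⟨y, hy2, hy1⟩
    have hpos : 0 < volume (Θt ∩ Metric.ball x (δ / 2)) := hopen'.measure_pos volume hne'
    have hfin : volume (Θt ∩ Metric.ball x (δ / 2)) < ⊤ :=
      lt_of_le_of_lt (measure_mono Set.inter_subset_left) hTfin
    exact ENNReal.toReal_pos hpos.ne' hfin.ne
  · intro θ hθ
    have := hcover hθ
    simp only [Set.mem_iUnion] at this
    obtain ⟨x, hx, hxball⟩ := this
    have hsub : Metric.ball x (δ / 2) ⊆ Metric.ball θ δ := by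
      intro y hy
      rw [Metric.mem_ball] at *
      calc dist y θ ≤ dist y x + dist x θ := dist_triangle _ _ _
        _ < δ / 2 + δ / 2 := by
            have : dist x θ < δ / 2 := by rw [dist_comm]; exact hxball
            linarith
        _ = δ := by ring
    have hmono : volume (Θt ∩ Metric.ball x (δ / 2)) ≤ volume (Θt ∩ Metric.ball θ δ) :=
      measure_mono (Set.inter_subset_inter_right _ hsub)
    have hfin2 : volume (Θt ∩ Metric.ball θ δ) < ⊤ :=
      lt_of_le_of_lt (measure_mono Set.inter_subset_left) hTfin
    calc t.inf' htne f ≤ f x := Finset.inf'_le f hx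
      _ ≤ (volume (Θt ∩ Metric.ball θ δ)).toReal := ENNReal.toReal_mono hfin2.ne hmono

/-- Laplace-type approximation. -/
theorem stmt_14 {k : ℕ} (Θt : Set (Fin k → ℝ)) (hne : Θt.Nonempty)
    (hopen : IsOpen Θt) (hbdd : Bornology.IsBounded Θt)
    (W : ℕ → (Fin k → ℝ) → ℝ)
    (hWcont : ∀ n, ContinuousOn (W n) (closure Θt))
    (hWnn : ∀ n, ∀ θ ∈ closure Θt, 0 ≤ W n θ)
    (hequi : ∀ ε : ℝ, 0 < ε → ∃ δ : ℝ, 0 < δ ∧ ∀ n : ℕ,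
      ∀ θ ∈ closure Θt, ∀ θ' ∈ closure Θt, ‖θ - θ'‖ ≤ δ → |W n θ - W n θ'| ≤ ε) :
    Tendsto (fun n : ℕ =>
      (1 / (n : ℝ)) * Real.log (∫ θ in Θt, Real.exp (-(n : ℝ) * W n θ)) +
        sInf (W n '' Θt)) atTop (nhds 0) := by
  classical
  have hK : IsCompact (closure Θt) := hbdd.isCompact_closure
  have hTfin : volume Θt < ⊤ :=
    lt_of_le_of_lt (measure_mono subset_closure) hK.measure_lt_top
  have hTpos : 0 < volume Θt := hopen.measure_pos volume hne
  set Vr : ℝ := (volume Θt).toReal with hVr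
  have hVrpos : 0 < Vr := ENNReal.toReal_pos hTpos.ne' hTfin.ne
  have himg : ∀ n, (W n '' Θt).Nonempty := fun n => hne.image _
  have hbdd0 : ∀ n, BddBelow (W n '' Θt) := by
    intro n
    refine ⟨0, ?_⟩
    rintro x ⟨θ, hθ, rfl⟩
    exact hWnn n θ (subset_closure hθ)
  have hm_le : ∀ n, ∀ θ ∈ Θt, sInf (W n '' Θt) ≤ W n θ :=
    fun n θ hθ => csInf_le (hbdd0 n) ⟨θ, hθ, rfl⟩
  -- integrability
  have hIFM : IsFiniteMeasure (volume.restrict Θt) :=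
    ⟨by rwa [Measure.restrict_apply_univ]⟩
  have hinteg : ∀ n : ℕ, IntegrableOn (fun θ => Real.exp (-(n : ℝ) * W n θ)) Θt volume := by
    intro n
    have hc : ContinuousOn (fun θ => Real.exp (-(n : ℝ) * W n θ)) Θt :=
      Real.continuous_exp.comp_continuousOn
        (continuousOn_const.mul ((hWcont n).mono subset_closure))
    refine ⟨hc.aestronglyMeasurable hopen.measurableSet, ?_⟩
    refine HasFiniteIntegral.of_bounded (C := 1) ?_
    filter_upwards [ae_restrict_mem hopen.measurableSet] with θ hθ
    rw [Real.norm_eq_abs, abs_of_pos (Real.exp_pos _)]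
    refine Real.exp_le_one_iff.mpr ?_
    have h0 := hWnn n θ (subset_closure hθ)
    have hn0 : (0:ℝ) ≤ (n:ℝ) := Nat.cast_nonneg n
    nlinarith
  rw [NormedAddCommGroup.tendsto_nhds_zero]
  intro ε hε
  set ε' : ℝ := ε / 4 with hε'
  have hε'pos : 0 < ε' := by positivity
  obtain ⟨δ, hδpos, hδ⟩ := hequi ε' hε'pos
  obtain ⟨c, hcpos, hc⟩ := stmt_14_cover Θt hne hopen hbdd hδpos
  have h1 : Tendsto (fun n : ℕ => Real.log Vr / n) atTop (nhds 0) :=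
    tendsto_const_div_atTop_nhds_zero_nat _
  have h2 : Tendsto (fun n : ℕ => Real.log c / n) atTop (nhds 0) :=
    tendsto_const_div_atTop_nhds_zero_nat _
  have e1 : ∀ᶠ n : ℕ in atTop, |Real.log Vr / n| < ε / 2 :=
    (NormedAddCommGroup.tendsto_nhds_zero.mp h1) (ε / 2) (by linarith)
  have e2 : ∀ᶠ n : ℕ in atTop, |Real.log c / n| < ε / 2 :=
    (NormedAddCommGroup.tendsto_nhds_zero.mp h2) (ε / 2) (by linarith)
  filter_upwards [e1, e2, eventually_ge_atTop 1] with n he1 he2 hn1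
  set m : ℝ := sInf (W n '' Θt) with hm
  set I : ℝ := ∫ θ in Θt, Real.exp (-(n : ℝ) * W n θ) with hI
  have hnpos : (0:ℝ) < (n:ℝ) := by exact_mod_cast Nat.lt_of_lt_of_le Nat.zero_lt_one hn1
  -- choose near-minimizer
  have hsinf : sInf (W n '' Θt) < m + ε' := by rw [← hm]; linarith
  obtain ⟨y, ⟨θ₀, hθ₀, rfl⟩, hy⟩ := (csInf_lt_iff (hbdd0 n) (himg n)).mp hsinf
  set S : Set (Fin k → ℝ) := Θt ∩ Metric.ball θ₀ δ with hS
  have hSmeas : MeasurableSet S := (hopen.inter Metric.isOpen_ball).measurableSet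
  have hSsub : S ⊆ Θt := Set.inter_subset_left
  have hSfin : volume S < ⊤ := lt_of_le_of_lt (measure_mono hSsub) hTfin
  have hWS : ∀ θ ∈ S, W n θ ≤ m + 2 * ε' := by
    rintro θ ⟨hθT, hθb⟩
    have hdist : ‖θ - θ₀‖ ≤ δ := by
      rw [← dist_eq_norm]
      exact le_of_lt (Metric.mem_ball.mp hθb)
    have habs := hδ n θ (subset_closure hθT) θ₀ (subset_closure hθ₀) hdist
    have := abs_le.mp habs
    linarith [this.1, this.2]
  -- lower bound on I
  have hcS : c ≤ (volume S).toReal := hc θ₀ (subset_closure hθ₀)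
  have hlow : Real.exp (-(n : ℝ) * (m + 2 * ε')) * c ≤ I := by
    have step1 : Real.exp (-(n : ℝ) * (m + 2 * ε')) * c
        ≤ (volume S).toReal * Real.exp (-(n : ℝ) * (m + 2 * ε')) := by
      rw [mul_comm]
      exact mul_le_mul_of_nonneg_right hcS (Real.exp_pos _).le
    have step2 : (volume S).toReal * Real.exp (-(n : ℝ) * (m + 2 * ε'))
        ≤ ∫ θ in S, Real.exp (-(n : ℝ) * W n θ) := by
      have hconst : (∫ _ in S, Real.exp (-(n : ℝ) * (m + 2 * ε')) ∂volume)
          = (volume S).toReal * Real.exp (-(n : ℝ) * (m + 2 * ε')) := by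
        rw [setIntegral_const, smul_eq_mul]; rfl
      rw [← hconst]
      refine setIntegral_mono_on (integrableOn_const hSfin.ne)
        ((hinteg n).mono_set hSsub) hSmeas ?_
      intro θ hθ
      refine Real.exp_le_exp.mpr ?_
      have := hWS θ hθ
      nlinarith
    have step3 : (∫ θ in S, Real.exp (-(n : ℝ) * W n θ)) ≤ I := by
      refine setIntegral_mono_set (hinteg n) ?_ (HasSubset.Subset.eventuallyLE hSsub)
      exact Filter.Eventually.of_forall fun θ => (Real.exp_pos _).le
    linarith
  have hIpos : 0 < I := lt_of_lt_of_le (by positivity) hlow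
  -- upper bound on I
  have hup : I ≤ Vr * Real.exp (-(n : ℝ) * m) := by
    have hconst : (∫ _ in Θt, Real.exp (-(n : ℝ) * m) ∂volume)
        = Vr * Real.exp (-(n : ℝ) * m) := by
      rw [setIntegral_const, smul_eq_mul]; rfl
    rw [← hconst]
    refine setIntegral_mono_on (hinteg n) (integrableOn_const hTfin.ne)
      hopen.measurableSet ?_
    intro θ hθ
    refine Real.exp_le_exp.mpr ?_
    have := hm_le n θ hθ
    nlinarith
  -- take logs
  have hloglow : -(n : ℝ) * (m + 2 * ε') + Real.log c ≤ Real.log I := by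
    have := Real.log_le_log (by positivity) hlow
    rwa [Real.log_mul (Real.exp_ne_zero _) hcpos.ne', Real.log_exp] at this
  have hlogup : Real.log I ≤ Real.log Vr + -(n : ℝ) * m := by
    have := Real.log_le_log hIpos hup
    rwa [Real.log_mul hVrpos.ne' (Real.exp_ne_zero _), Real.log_exp] at this
  -- conclude
  rw [Real.norm_eq_abs, abs_lt]
  have hninv : (0:ℝ) < 1 / (n:ℝ) := by positivity
  constructor
  · -- lower: from hloglow
    have key : -2 * ε' + Real.log c / n ≤ 1 / (n:ℝ) * Real.log I + m := by
      have h := mul_le_mul_of_nonneg_left hloglow hninv.le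
      have heq : 1 / (n:ℝ) * (-(n : ℝ) * (m + 2 * ε') + Real.log c)
          = -(m + 2 * ε') + Real.log c / n := by
        field_simp
      rw [heq] at h
      linarith
    have habs2 := abs_lt.mp he2
    have : 2 * ε' = ε / 2 := by rw [hε']; ring
    linarith [habs2.1]
  · -- upper: from hlogup
    have key : 1 / (n:ℝ) * Real.log I + m ≤ Real.log Vr / n := by
      have h := mul_le_mul_of_nonneg_left hlogup hninv.le
      have heq : 1 / (n:ℝ) * (Real.log Vr + -(n : ℝ) * m)
          = Real.log Vr / n + -m := by
        field_simp
      rw [heq] at h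
      linarith
    have habs1 := abs_lt.mp he1
    linarith [habs1.2]
end
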